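/- arXiv:1611.09166 — 7 statements merged into one kernel-verified Lean document; each statement's English description precedes it below -/
import Mathlib

section
/- For any infinite subset P of the natural numbers, the set H_P(T) = {S : T^{-n} S T^n → I as n → ∞ along n ∈ P} is a group under composition. -/
open MeasureTheory Filter Topology

variable {X : Type*} [MeasurableSpace X]

/-- The conjugate `T^{-n} S T^n` of `S` by the `n`-th power of `T` (with inverse `Tinv`),
as a point map. -/
def conjMap (T Tinv S : X → X) (n : ℕ) : X → X :=
  fun x => Tinv^[n] (S (T^[n] x))

/-- `S` is homoclinic for `T` along the filter `L` : the Koopman operators of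
`T^{-n} S T^n` converge strongly to the identity on `L²(X, μ)` along `L`. -/
def HomoclinicAlong (μ : Measure X) (T Tinv S : X → X) (L : Filter ℕ) : Prop :=
  ∀ f : X → ℝ, MemLp f 2 μ →
    Tendsto (fun n => eLpNorm (fun x => f (conjMap T Tinv S n x) - f x) 2 μ) L (𝓝 0)

/-- `S` is an invertible measure-preserving transformation of `(X, μ)`. -/
def InvMP (μ : Measure X) (S : X → X) : Prop :=
  MeasurePreserving S μ μ ∧
    ∃ Sinv : X → X, MeasurePreserving Sinv μ μ ∧
      Function.LeftInverse Sinv S ∧ Function.RightInverse Sinv S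

lemma conjMap_measurePreserving {μ : Measure X} {T Tinv S : X → X}
    (hT : MeasurePreserving T μ μ) (hTinv : MeasurePreserving Tinv μ μ)
    (hS : MeasurePreserving S μ μ) (n : ℕ) :
    MeasurePreserving (conjMap T Tinv S n) μ μ :=
  (hTinv.iterate n).comp (hS.comp (hT.iterate n))

/-- For any infinite `P ⊆ ℕ`, the homoclinic set `H_P(T)` is a group under composition:
it contains the identity, is closed under composition, and closed under inverses. -/
theorem homoclinicAlongP_is_group (μ : Measure X) [IsProbabilityMeasure μ]
    (T Tinv : X → X) (hT : MeasurePreserving T μ μ) (hTinv : MeasurePreserving Tinv μ μ)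
    (hTl : Function.LeftInverse Tinv T) (hTr : Function.RightInverse Tinv T)
    (P : Set ℕ) (hP : P.Infinite) :
    (HomoclinicAlong μ T Tinv id (atTop ⊓ 𝓟 P)) ∧
    (∀ S₁ S₂ : X → X, InvMP μ S₁ → InvMP μ S₂ →
      HomoclinicAlong μ T Tinv S₁ (atTop ⊓ 𝓟 P) → HomoclinicAlong μ T Tinv S₂ (atTop ⊓ 𝓟 P) →
      HomoclinicAlong μ T Tinv (S₁ ∘ S₂) (atTop ⊓ 𝓟 P)) ∧
    (∀ S Sinv : X → X, InvMP μ S → MeasurePreserving Sinv μ μ →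
      Function.LeftInverse Sinv S → Function.RightInverse Sinv S →
      HomoclinicAlong μ T Tinv S (atTop ⊓ 𝓟 P) → HomoclinicAlong μ T Tinv Sinv (atTop ⊓ 𝓟 P)) := by
  refine ⟨?_, ?_, ?_⟩
  · -- identity
    intro f hf
    have h : ∀ n : ℕ, (fun x => f (conjMap T Tinv id n x) - f x) = (0 : X → ℝ) := by
      intro n
      funext x
      simp [conjMap, hTl.iterate n x]
    have h2 : (fun n => eLpNorm (fun x => f (conjMap T Tinv id n x) - f x) 2 μ)
        = fun _ => (0 : ENNReal) := by
      funext n; rw [h n, eLpNorm_zero]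
    rw [h2]
    exact tendsto_const_nhds
  · -- composition
    intro S₁ S₂ hS₁ hS₂ h₁ h₂
    intro f hf
    have hbound : ∀ n : ℕ,
        eLpNorm (fun x => f (conjMap T Tinv (S₁ ∘ S₂) n x) - f x) 2 μ ≤
        eLpNorm (fun x => f (conjMap T Tinv S₁ n x) - f x) 2 μ +
        eLpNorm (fun x => f (conjMap T Tinv S₂ n x) - f x) 2 μ := by
      intro n
      have hC₁ : MeasurePreserving (conjMap T Tinv S₁ n) μ μ :=
        conjMap_measurePreserving hT hTinv hS₁.1 n
      have hC₂ : MeasurePreserving (conjMap T Tinv S₂ n) μ μ :=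
        conjMap_measurePreserving hT hTinv hS₂.1 n
      set g₁ : X → ℝ := fun x => f (conjMap T Tinv S₁ n x) - f x with hg₁def
      set g₂ : X → ℝ := fun x => f (conjMap T Tinv S₂ n x) - f x with hg₂def
      have hg₁ : AEStronglyMeasurable g₁ μ :=
        (hf.1.comp_measurePreserving hC₁).sub hf.1
      have hg₂ : AEStronglyMeasurable g₂ μ :=
        (hf.1.comp_measurePreserving hC₂).sub hf.1
      have hfun : (fun x => f (conjMap T Tinv (S₁ ∘ S₂) n x) - f x)
          = g₁ ∘ conjMap T Tinv S₂ n + g₂ := by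
        funext x
        have hcomp : conjMap T Tinv (S₁ ∘ S₂) n x =
            conjMap T Tinv S₁ n (conjMap T Tinv S₂ n x) := by
          simp only [conjMap, Function.comp_apply]
          rw [hTr.iterate n (S₂ (T^[n] x))]
        simp only [Pi.add_apply, Function.comp_apply, hg₁def, hg₂def, hcomp]
        ring
      rw [hfun]
      calc eLpNorm (g₁ ∘ conjMap T Tinv S₂ n + g₂) 2 μ
          ≤ eLpNorm (g₁ ∘ conjMap T Tinv S₂ n) 2 μ + eLpNorm g₂ 2 μ :=
            eLpNorm_add_le (hg₁.comp_measurePreserving hC₂) hg₂ one_le_two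
        _ = eLpNorm g₁ 2 μ + eLpNorm g₂ 2 μ := by
            rw [eLpNorm_comp_measurePreserving hg₁ hC₂]
    have hsum := (h₁ f hf).add (h₂ f hf)
    rw [add_zero] at hsum
    exact tendsto_of_tendsto_of_tendsto_of_le_of_le tendsto_const_nhds hsum
      (fun n => zero_le) hbound
  · -- inverse
    intro S Sinv hS hSinvMP hSl hSr h
    intro f hf
    have key : ∀ n : ℕ,
        eLpNorm (fun x => f (conjMap T Tinv Sinv n x) - f x) 2 μ =
        eLpNorm (fun x => f (conjMap T Tinv S n x) - f x) 2 μ := by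
      intro n
      have hC : MeasurePreserving (conjMap T Tinv S n) μ μ :=
        conjMap_measurePreserving hT hTinv hS.1 n
      set g : X → ℝ := fun x => f (conjMap T Tinv Sinv n x) - f x with hgdef
      have hg : AEStronglyMeasurable g μ :=
        (hf.1.comp_measurePreserving (conjMap_measurePreserving hT hTinv hSinvMP n)).sub hf.1
      have hfun : g ∘ conjMap T Tinv S n = -(fun x => f (conjMap T Tinv S n x) - f x) := by
        funext x
        have hid : conjMap T Tinv Sinv n (conjMap T Tinv S n x) = x := by
          simp only [conjMap]
          rw [hTr.iterate n (S (T^[n] x)), hSl (T^[n] x), hTl.iterate n x]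
        simp only [Function.comp_apply, Pi.neg_apply, hgdef, hid]
        ring
      rw [← eLpNorm_comp_measurePreserving hg hC, hfun, eLpNorm_neg]
    have h2 : (fun n => eLpNorm (fun x => f (conjMap T Tinv Sinv n x) - f x) 2 μ)
        = fun n => eLpNorm (fun x => f (conjMap T Tinv S n x) - f x) 2 μ := funext key
    rw [h2]
    exact h f hf
end

section
/- The σ-algebra of sets fixed by every element of H_P(T) is T-invariant: if a measurable set A satisfies μ(S A Δ A) = 0 for all S ∈ H_P(T), then T A also satisfies μ(S (T A) Δ T A) = 0 for all S ∈ H_P(T). -/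
open MeasureTheory Filter Topology

variable {X : Type*} [MeasurableSpace X]

open scoped symmDiff

/-- The σ-algebra of sets fixed by every element of `H_P(T)` is `T`-invariant: if `A` is
fixed mod `μ` by every `S ∈ H_P(T)`, then so is `T A` (written as `Tinv ⁻¹' A`). -/
theorem fixed_algebra_T_invariant (μ : Measure X) [IsProbabilityMeasure μ]
    (T Tinv : X → X) (hT : MeasurePreserving T μ μ) (hTinv : MeasurePreserving Tinv μ μ)
    (hTl : Function.LeftInverse Tinv T) (hTr : Function.RightInverse Tinv T)
    (P : Set ℕ) (hP : P.Infinite)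
    (A : Set X) (hA : MeasurableSet A)
    (hfix : ∀ S : X → X, InvMP μ S → HomoclinicAlong μ T Tinv S (atTop ⊓ 𝓟 P) →
      μ ((S ⁻¹' A) ∆ A) = 0) :
    ∀ S : X → X, InvMP μ S → HomoclinicAlong μ T Tinv S (atTop ⊓ 𝓟 P) →
      μ ((S ⁻¹' (Tinv ⁻¹' A)) ∆ (Tinv ⁻¹' A)) = 0 := by
  intro S hS hH
  obtain ⟨hSmp, Sinv, hSinvmp, hSl, hSr⟩ := hS
  -- The conjugate S'' = Tinv ∘ S ∘ T
  set S'' : X → X := fun x => Tinv (S (T x)) with hS''def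
  have hS''mp : MeasurePreserving S'' μ μ := hTinv.comp (hSmp.comp hT)
  have hS''inv : InvMP μ S'' := by
    refine ⟨hS''mp, fun x => Tinv (Sinv (T x)), hTinv.comp (hSinvmp.comp hT), ?_, ?_⟩
    · intro x
      simp only [hS''def, hTr (S (T x)), hSl (T x), hTl x]
    · intro x
      simp only [hS''def, hTr (Sinv (T x)), hSr (T x), hTl x]
  -- key pointwise identity: conjMap T Tinv S'' n = conjMap T Tinv S (n+1) ∘ ... relating via T
  have hconj : ∀ n x, conjMap T Tinv S'' n x = Tinv (conjMap T Tinv S n (T x)) := by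
    intro n x
    simp only [conjMap, hS''def]
    have h1 : T^[n] (T x) = T (T^[n] x) := Function.Commute.iterate_self T n x ▸ by
      rw [← Function.iterate_succ_apply, Function.iterate_succ_apply']
    rw [h1, ← Function.iterate_succ_apply' Tinv]
    rfl
  -- S'' is homoclinic along the same filter
  have hH'' : HomoclinicAlong μ T Tinv S'' (atTop ⊓ 𝓟 P) := by
    intro f hf
    have hfinv : MemLp (f ∘ Tinv) 2 μ := hf.comp_measurePreserving hTinv
    have := hH (f ∘ Tinv) hfinv
    convert this using 2 with n
    have hptwise : (fun x => f (conjMap T Tinv S'' n x) - f x)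
        = (fun x => (f ∘ Tinv) (conjMap T Tinv S n x) - (f ∘ Tinv) x) ∘ T := by
      funext x
      simp only [Function.comp_apply, hconj n x, hTl x]
    rw [hptwise]
    refine eLpNorm_comp_measurePreserving ?_ hT
    have hconjmp : MeasurePreserving (conjMap T Tinv S n) μ μ :=
      (hTinv.iterate n).comp (hSmp.comp (hT.iterate n))
    exact (hfinv.comp_measurePreserving hconjmp).aestronglyMeasurable.sub
      hfinv.aestronglyMeasurable
  have hfixed := hfix S'' hS''inv hH''
  -- transfer the conclusion via T
  have hpre : T ⁻¹' ((S ⁻¹' (Tinv ⁻¹' A)) ∆ (Tinv ⁻¹' A)) = (S'' ⁻¹' A) ∆ A := by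
    rw [Set.preimage_symmDiff]
    have h2 : T ⁻¹' (Tinv ⁻¹' A) = A := by ext x; simp [hTl x]
    rw [h2]
    rfl
  calc μ ((S ⁻¹' (Tinv ⁻¹' A)) ∆ (Tinv ⁻¹' A))
      = μ (T ⁻¹' ((S ⁻¹' (Tinv ⁻¹' A)) ∆ (Tinv ⁻¹' A))) := by
        rw [← hT.map_eq]
        rw [Measure.map_apply hT.measurable]
        · rw [hT.map_eq]
        · exact MeasurableSet.symmDiff
            (hSmp.measurable (hTinv.measurable hA)) (hTinv.measurable hA)
    _ = μ ((S'' ⁻¹' A) ∆ A) := by rw [hpre]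
    _ = 0 := hfixed
end

section
/- The homoclinic group H_P(T) is a full group: if S ∈ H_P(T) and R is a measure-preserving transformation such that R(x) = S^{n(x)}(x) for a measurable integer-valued function n, and R is invertible, then R ∈ H_P(T). -/
open MeasureTheory Filter Topology

variable {X : Type*} [MeasurableSpace X]

/-- The `n`-th power `S^n` (for `n : ℤ`) of an invertible transformation `S` with
inverse `Sinv`. -/
def zIter (S Sinv : X → X) (n : ℤ) (x : X) : X :=
  if 0 ≤ n then S^[n.toNat] x else Sinv^[(-n).toNat] x

section Aux

variable {μ : Measure X} {T Tinv S Sinv : X → X} {L : Filter ℕ}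

lemma conjMap_mp (hT : MeasurePreserving T μ μ) (hTinv : MeasurePreserving Tinv μ μ)
    (hS : MeasurePreserving S μ μ) (k : ℕ) : MeasurePreserving (conjMap T Tinv S k) μ μ :=
  (hTinv.iterate k).comp (hS.comp (hT.iterate k))

lemma conjMap_measurable (hT : Measurable T) (hTinv : Measurable Tinv) (hS : Measurable S)
    (k : ℕ) : Measurable (conjMap T Tinv S k) :=
  (hTinv.iterate k).comp (hS.comp (hT.iterate k))

lemma conjMap_iterate (hTl : Function.LeftInverse Tinv T) (hTr : Function.RightInverse Tinv T)
    (k m : ℕ) (x : X) : (conjMap T Tinv S k)^[m] x = Tinv^[k] (S^[m] (T^[k] x)) := by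
  induction m with
  | zero => simp [(hTl.iterate k) x]
  | succ m ih =>
      rw [Function.iterate_succ_apply', ih]
      simp only [conjMap, (hTr.iterate k) _, Function.iterate_succ_apply']

lemma conjMap_leftInverse (hTl : Function.LeftInverse Tinv T)
    (hTr : Function.RightInverse Tinv T) (hSl : Function.LeftInverse Sinv S) (k : ℕ) :
    Function.LeftInverse (conjMap T Tinv Sinv k) (conjMap T Tinv S k) := fun x => by
  simp only [conjMap, (hTr.iterate k) _, hSl _, (hTl.iterate k) x]

lemma tendsto_iterate_conj [IsProbabilityMeasure μ]
    (hT : MeasurePreserving T μ μ) (hTinv : MeasurePreserving Tinv μ μ)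
    (hS : MeasurePreserving S μ μ)
    {g : X → ℝ} (hgm : Measurable g) (hg : MemLp g 2 μ)
    (hSH : HomoclinicAlong μ T Tinv S L) (m : ℕ) :
    Tendsto (fun k => eLpNorm (fun x => g ((conjMap T Tinv S k)^[m] x) - g x) 2 μ) L (𝓝 0) := by
  induction m with
  | zero =>
      have : ∀ k : ℕ, eLpNorm (fun x => g ((conjMap T Tinv S k)^[0] x) - g x) 2 μ = 0 := by
        intro k
        simp only [Function.iterate_zero, id_eq, sub_self]
        exact eLpNorm_zero
      simp only [this]
      exact (tendsto_const_nhds : Tendsto (fun _ : ℕ => (0 : ENNReal)) L (𝓝 0))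
  | succ m ih =>
      have h1 := hSH g hg
      have key : ∀ k, eLpNorm (fun x => g ((conjMap T Tinv S k)^[m + 1] x) - g x) 2 μ ≤
          eLpNorm (fun x => g ((conjMap T Tinv S k)^[m] x) - g x) 2 μ +
          eLpNorm (fun x => g (conjMap T Tinv S k x) - g x) 2 μ := by
        intro k
        set C := conjMap T Tinv S k with hC
        have hCmeas : Measurable C :=
          conjMap_measurable hT.measurable hTinv.measurable hS.measurable k
        have hmeas1 : Measurable fun x => g (C^[m] x) - g x :=
          (hgm.comp (hCmeas.iterate m)).sub hgm
        have hmeas2 : Measurable fun x => g (C x) - g x := (hgm.comp hCmeas).sub hgm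
        have heq : (fun x => g (C^[m + 1] x) - g x) =
            ((fun x => g (C^[m] x) - g x) ∘ C) + fun x => g (C x) - g x := by
          funext x
          simp only [Pi.add_apply, Function.comp_apply, Function.iterate_succ_apply]
          ring
        rw [heq]
        refine (eLpNorm_add_le ((hmeas1.comp hCmeas).aestronglyMeasurable)
          hmeas2.aestronglyMeasurable one_le_two).trans ?_
        rw [eLpNorm_comp_measurePreserving hmeas1.aestronglyMeasurable
          (conjMap_mp hT hTinv hS k)]
      have h2 : Tendsto (fun k => eLpNorm (fun x => g ((conjMap T Tinv S k)^[m] x) - g x) 2 μ +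
          eLpNorm (fun x => g (conjMap T Tinv S k x) - g x) 2 μ) L (𝓝 0) := by
        simpa using ih.add h1
      exact tendsto_of_tendsto_of_tendsto_of_le_of_le tendsto_const_nhds h2
        (fun k => zero_le) key

lemma eLpNorm_inv_iterate_eq
    (hT : MeasurePreserving T μ μ) (hTinv : MeasurePreserving Tinv μ μ)
    (hS : MeasurePreserving S μ μ) (hSinv : Measurable Sinv)
    (hTl : Function.LeftInverse Tinv T) (hTr : Function.RightInverse Tinv T)
    (hSl : Function.LeftInverse Sinv S)
    {g : X → ℝ} (hgm : Measurable g) (k m : ℕ) :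
    eLpNorm (fun x => g ((conjMap T Tinv Sinv k)^[m] x) - g x) 2 μ =
    eLpNorm (fun x => g ((conjMap T Tinv S k)^[m] x) - g x) 2 μ := by
  set D := conjMap T Tinv S k with hD
  set E := conjMap T Tinv Sinv k with hE
  have hEmeas : Measurable E :=
    conjMap_measurable hT.measurable hTinv.measurable hSinv k
  have hED : Function.LeftInverse E D := conjMap_leftInverse hTl hTr hSl k
  have hmeas : Measurable fun x => g (E^[m] x) - g x :=
    (hgm.comp (hEmeas.iterate m)).sub hgm
  have h1 : eLpNorm ((fun x => g (E^[m] x) - g x) ∘ D^[m]) 2 μ =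
      eLpNorm (fun x => g (E^[m] x) - g x) 2 μ :=
    eLpNorm_comp_measurePreserving hmeas.aestronglyMeasurable
      ((conjMap_mp hT hTinv hS k).iterate m)
  rw [← h1]
  have h2 : (fun x => g (E^[m] x) - g x) ∘ D^[m] = -fun x => g (D^[m] x) - g x := by
    funext x
    simp only [Function.comp_apply, Pi.neg_apply, (hED.iterate m) x, neg_sub]
  rw [h2, eLpNorm_neg]

lemma tendsto_zIter_conj [IsProbabilityMeasure μ]
    (hT : MeasurePreserving T μ μ) (hTinv : MeasurePreserving Tinv μ μ)
    (hS : MeasurePreserving S μ μ) (hSinv : Measurable Sinv)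
    (hTl : Function.LeftInverse Tinv T) (hTr : Function.RightInverse Tinv T)
    (hSl : Function.LeftInverse Sinv S)
    {g : X → ℝ} (hgm : Measurable g) (hg : MemLp g 2 μ)
    (hSH : HomoclinicAlong μ T Tinv S L) (j : ℤ) :
    Tendsto (fun k => eLpNorm
      (fun x => g (zIter (conjMap T Tinv S k) (conjMap T Tinv Sinv k) j x) - g x) 2 μ)
      L (𝓝 0) := by
  rcases le_or_gt 0 j with hj | hj
  · simp only [zIter, if_pos hj]
    exact tendsto_iterate_conj hT hTinv hS hgm hg hSH j.toNat
  · simp only [zIter, if_neg (not_le.2 hj)]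
    refine (tendsto_iterate_conj hT hTinv hS hgm hg hSH (-j).toNat).congr fun k => ?_
    exact (eLpNorm_inv_iterate_eq hT hTinv hS hSinv hTl hTr hSl hgm k (-j).toNat).symm

end Aux

/-- `H_P(T)` is a full group: if `S ∈ H_P(T)` and the invertible measure-preserving `R`
satisfies `R x = S^{n x} x` for a measurable `n : X → ℤ`, then `R ∈ H_P(T)`. -/
theorem homoclinicAlongP_is_full (μ : Measure X) [IsProbabilityMeasure μ]
    (T Tinv : X → X) (hT : MeasurePreserving T μ μ) (hTinv : MeasurePreserving Tinv μ μ)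
    (hTl : Function.LeftInverse Tinv T) (hTr : Function.RightInverse Tinv T)
    (P : Set ℕ) (hP : P.Infinite)
    (S Sinv : X → X) (hS : MeasurePreserving S μ μ) (hSinv : MeasurePreserving Sinv μ μ)
    (hSl : Function.LeftInverse Sinv S) (hSr : Function.RightInverse Sinv S)
    (hSH : HomoclinicAlong μ T Tinv S (atTop ⊓ 𝓟 P))
    (R : X → X) (hR : InvMP μ R)
    (n : X → ℤ) (hn : Measurable n) (hRS : ∀ x, R x = zIter S Sinv (n x) x) :
    HomoclinicAlong μ T Tinv R (atTop ⊓ 𝓟 P) := by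
  classical
  obtain ⟨hRmp, -⟩ := hR
  set L := atTop ⊓ 𝓟 P with hL
  intro f hf
  rw [ENNReal.tendsto_nhds_zero]
  intro ε hε
  -- a convenient positive finite quarter of ε
  set ε4 : ENNReal := min ε 1 / 4 with hε4def
  have hε4pos : 0 < ε4 :=
    ENNReal.div_pos (lt_min hε one_pos).ne' (by norm_num)
  have hε4 : ε4 + ε4 + ε4 + ε4 ≤ ε := by
    have h4 : ε4 + ε4 + ε4 + ε4 = 4 * ε4 := by ring
    rw [h4, hε4def, ENNReal.mul_div_cancel (by norm_num) (by norm_num)]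
    exact min_le_left _ _
  -- approximate f by a (bounded) simple function g
  obtain ⟨g, hgf, hg2⟩ := hf.exists_simpleFunc_eLpNorm_sub_lt (by norm_num) hε4pos.ne'
  obtain ⟨C0, hC0⟩ := g.exists_forall_norm_le
  set C : ℝ := max C0 0 with hCdef
  have hgC : ∀ x, |g x| ≤ C := fun x =>
    (Real.norm_eq_abs (g x) ▸ hC0 x).trans (le_max_left _ _)
  have hCnonneg : (0 : ℝ) ≤ C := le_max_right _ _
  have hgm : Measurable g := g.measurable
  -- reduce to g
  have key1 : ∀ k, eLpNorm (fun x => f (conjMap T Tinv R k x) - f x) 2 μ ≤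
      ε4 + eLpNorm (fun x => g (conjMap T Tinv R k x) - g x) 2 μ + ε4 := by
    intro k
    set Ck := conjMap T Tinv R k with hCk
    have hCkmp : MeasurePreserving Ck μ μ := conjMap_mp hT hTinv hRmp k
    have hCkmeas : Measurable Ck :=
      conjMap_measurable hT.measurable hTinv.measurable hRmp.measurable k
    have hfg : AEStronglyMeasurable (f - ⇑g) μ := hf.1.sub g.aestronglyMeasurable
    have heq : (fun x => f (Ck x) - f x) =
        ((f - ⇑g) ∘ Ck) + ((fun x => g (Ck x) - g x) + (⇑g - f)) := by
      funext x
      simp only [Pi.add_apply, Pi.sub_apply, Function.comp_apply]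
      ring
    rw [heq]
    have hA : AEStronglyMeasurable ((f - ⇑g) ∘ Ck) μ := hfg.comp_measurePreserving hCkmp
    have hB : AEStronglyMeasurable (fun x => g (Ck x) - g x) μ :=
      ((hgm.comp hCkmeas).sub hgm).aestronglyMeasurable
    have hC' : AEStronglyMeasurable (⇑g - f) μ := g.aestronglyMeasurable.sub hf.1
    calc eLpNorm (((f - ⇑g) ∘ Ck) + ((fun x => g (Ck x) - g x) + (⇑g - f))) 2 μ
        ≤ eLpNorm ((f - ⇑g) ∘ Ck) 2 μ +
          eLpNorm ((fun x => g (Ck x) - g x) + (⇑g - f)) 2 μ :=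
          eLpNorm_add_le hA (hB.add hC') one_le_two
      _ ≤ eLpNorm ((f - ⇑g) ∘ Ck) 2 μ +
          (eLpNorm (fun x => g (Ck x) - g x) 2 μ + eLpNorm (⇑g - f) 2 μ) := by
          gcongr
          exact eLpNorm_add_le hB hC' one_le_two
      _ ≤ ε4 + (eLpNorm (fun x => g (Ck x) - g x) 2 μ + ε4) := by
          gcongr
          · rw [eLpNorm_comp_measurePreserving hfg hCkmp]
            exact hgf.le
          · rw [eLpNorm_sub_comm]
            exact hgf.le
      _ = ε4 + eLpNorm (fun x => g (Ck x) - g x) 2 μ + ε4 := by ring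
  -- choose M so that the bad set is small
  set sM : ℕ → Set X := fun M => {x | (M : ℤ) < |n x|} with hsM
  have hsMmeas : ∀ M, MeasurableSet (sM M) := by
    intro M
    have : sM M = n ⁻¹' {j : ℤ | (M : ℤ) < |j|} := rfl
    rw [this]
    exact hn ((Set.to_countable _).measurableSet)
  have hsManti : Antitone sM := by
    intro M M' hMM' x hx
    have h1 : (M : ℤ) ≤ (M' : ℤ) := by exact_mod_cast hMM'
    have h2 : (M' : ℤ) < |n x| := hx
    exact lt_of_le_of_lt h1 h2
  have hsMempty : ⋂ M, sM M = ∅ := by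
    ext x
    simp only [Set.mem_iInter, Set.mem_empty_iff_false, iff_false, not_forall]
    refine ⟨(n x).natAbs, ?_⟩
    show ¬ (((n x).natAbs : ℤ) < |n x|)
    rw [not_lt, Int.abs_eq_natAbs]
  have hμsM : Tendsto (fun M => μ (sM M)) atTop (𝓝 0) := by
    have := tendsto_measure_iInter_atTop (μ := μ)
      (fun M => (hsMmeas M).nullMeasurableSet) hsManti ⟨0, measure_ne_top μ _⟩
    rwa [hsMempty, measure_empty] at this
  have htend : Tendsto (fun M => (‖(2 * C : ℝ)‖₊ : ENNReal) * μ (sM M) ^ (1 / (2:ℝ)))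
      atTop (𝓝 0) :=
    (ENNReal.tendsto_const_mul_rpow_nhds_zero_of_pos ENNReal.coe_ne_top
      (by norm_num)).comp hμsM
  obtain ⟨M, hM⟩ := (htend.eventually_lt_const hε4pos).exists
  -- the finite window of powers
  have hgood : Tendsto (fun k => ∑ j ∈ Finset.Icc (-(M:ℤ)) (M:ℤ), eLpNorm
      (fun x => g (zIter (conjMap T Tinv S k) (conjMap T Tinv Sinv k) j x) - g x) 2 μ)
      L (𝓝 0) := by
    have := tendsto_finset_sum (Finset.Icc (-(M:ℤ)) (M:ℤ))
      (fun j _ => tendsto_zIter_conj hT hTinv hS hSinv.measurable hTl hTr hSl hgm hg2 hSH j)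
    simpa using this
  rw [ENNReal.tendsto_nhds_zero] at hgood
  filter_upwards [hgood ε4 hε4pos] with k hk
  -- now bound the middle term for this k
  set D := conjMap T Tinv S k with hD
  set E := conjMap T Tinv Sinv k with hE
  have hDmeas : Measurable D :=
    conjMap_measurable hT.measurable hTinv.measurable hS.measurable k
  have hEmeas : Measurable E :=
    conjMap_measurable hT.measurable hTinv.measurable hSinv.measurable k
  have hzmeas : ∀ j : ℤ, Measurable (zIter D E j) := by
    intro j
    unfold zIter
    split
    · exact hDmeas.iterate _
    · exact hEmeas.iterate _
  set Ck := conjMap T Tinv R k with hCk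
  have hCkmeas : Measurable Ck :=
    conjMap_measurable hT.measurable hTinv.measurable hRmp.measurable k
  -- key pointwise identity
  have hconjR : ∀ x, Ck x = zIter D E (n (T^[k] x)) x := by
    intro x
    have h1 : Ck x = Tinv^[k] (zIter S Sinv (n (T^[k] x)) (T^[k] x)) := by
      simp only [hCk, conjMap, hRS]
    rw [h1]
    unfold zIter
    split
    · rw [conjMap_iterate hTl hTr]
    · rw [conjMap_iterate hTl hTr]
  set F : X → ℝ := fun x => g (Ck x) - g x with hF
  have hFmeas : Measurable F := (hgm.comp hCkmeas).sub hgm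
  set bad : Set X := T^[k] ⁻¹' sM M with hbad
  have hbadmeas : MeasurableSet bad := (hT.measurable.iterate k) (hsMmeas M)
  have hbadμ : μ bad = μ (sM M) :=
    (hT.iterate k).measure_preimage (hsMmeas M).nullMeasurableSet
  -- split F along bad
  have hsplit : eLpNorm F 2 μ ≤
      eLpNorm (bad.indicator F) 2 μ + eLpNorm (badᶜ.indicator F) 2 μ := by
    nth_rewrite 1 [← Set.indicator_self_add_compl bad F]
    exact eLpNorm_add_le (hFmeas.indicator hbadmeas).aestronglyMeasurable
      (hFmeas.indicator hbadmeas.compl).aestronglyMeasurable one_le_two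
  -- bad part
  have hbadpart : eLpNorm (bad.indicator F) 2 μ ≤ ε4 := by
    have hmono : ∀ x, ‖bad.indicator F x‖ ≤ ‖bad.indicator (fun _ => (2 * C : ℝ)) x‖ := by
      intro x
      by_cases hx : x ∈ bad
      · simp only [Set.indicator_of_mem hx]
        rw [Real.norm_eq_abs, Real.norm_eq_abs, hF]
        have h1 : |g (Ck x) - g x| ≤ |g (Ck x)| + |g x| := abs_sub _ _
        have h2 : |(2 * C : ℝ)| = 2 * C := abs_of_nonneg (by linarith)
        rw [h2]
        calc |g (Ck x) - g x| ≤ |g (Ck x)| + |g x| := h1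
          _ ≤ C + C := add_le_add (hgC _) (hgC _)
          _ = 2 * C := by ring
      · simp [Set.indicator_of_notMem hx]
    calc eLpNorm (bad.indicator F) 2 μ
        ≤ eLpNorm (bad.indicator fun _ => (2 * C : ℝ)) 2 μ := eLpNorm_mono hmono
      _ = ‖(2 * C : ℝ)‖₊ * μ bad ^ (1 / (2:ENNReal).toReal) :=
          eLpNorm_indicator_const hbadmeas (by norm_num) (by norm_num)
      _ = ‖(2 * C : ℝ)‖₊ * μ (sM M) ^ (1 / (2:ℝ)) := by
          rw [hbadμ]; norm_num
      _ ≤ ε4 := hM.le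
  -- good part
  have hgoodpart : eLpNorm (badᶜ.indicator F) 2 μ ≤ ε4 := by
    set Φ : X → ℝ := ∑ j ∈ Finset.Icc (-(M:ℤ)) (M:ℤ),
      (fun x => |g (zIter D E j x) - g x|) with hΦ
    have hΦnonneg : ∀ x, 0 ≤ Φ x := by
      intro x
      rw [hΦ, Finset.sum_apply]
      exact Finset.sum_nonneg fun j _ => abs_nonneg _
    have hptwise : ∀ x, ‖badᶜ.indicator F x‖ ≤ ‖Φ x‖ := by
      intro x
      rw [Real.norm_eq_abs (Φ x), abs_of_nonneg (hΦnonneg x)]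
      by_cases hx : x ∈ badᶜ
      · rw [Set.indicator_of_mem hx]
        have hmem : n (T^[k] x) ∈ Finset.Icc (-(M:ℤ)) (M:ℤ) := by
          have hle : |n (T^[k] x)| ≤ (M : ℤ) := not_lt.mp hx
          rw [Finset.mem_Icc]
          exact abs_le.mp hle
        have h1 : ‖F x‖ = |g (zIter D E (n (T^[k] x)) x) - g x| := by
          simp only [hF, Real.norm_eq_abs, hconjR x]
        rw [h1, hΦ, Finset.sum_apply]
        exact Finset.single_le_sum (f := fun j => |g (zIter D E j x) - g x|)
          (fun j _ => abs_nonneg _) hmem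
      · rw [Set.indicator_of_notMem hx]
        simp [hΦnonneg x]
    calc eLpNorm (badᶜ.indicator F) 2 μ ≤ eLpNorm Φ 2 μ := eLpNorm_mono hptwise
      _ ≤ ∑ j ∈ Finset.Icc (-(M:ℤ)) (M:ℤ),
          eLpNorm (fun x => |g (zIter D E j x) - g x|) 2 μ := by
          rw [hΦ]
          exact eLpNorm_sum_le
            (fun j _ => (((hgm.comp (hzmeas j)).sub hgm).abs).aestronglyMeasurable) one_le_two
      _ = ∑ j ∈ Finset.Icc (-(M:ℤ)) (M:ℤ),
          eLpNorm (fun x => g (zIter D E j x) - g x) 2 μ := by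
          refine Finset.sum_congr rfl fun j _ => ?_
          rw [← eLpNorm_norm (fun x => g (zIter D E j x) - g x)]
          simp only [Real.norm_eq_abs]
      _ ≤ ε4 := hk
  calc eLpNorm (fun x => f (conjMap T Tinv R k x) - f x) 2 μ
      ≤ ε4 + eLpNorm F 2 μ + ε4 := key1 k
    _ ≤ ε4 + (ε4 + ε4) + ε4 := by
        gcongr
        exact hsplit.trans (add_le_add hbadpart hgoodpart)
    _ ≤ ε := by
        calc ε4 + (ε4 + ε4) + ε4 = ε4 + ε4 + ε4 + ε4 := by ring
          _ ≤ ε := hε4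
end

section
/- Let T be an invertible measure-preserving transformation of a probability space. If any joining limit measure ν on X^{k+1} (obtained as a limit of μ(B ∩ T^{m_i^1}B_1 ∩ … ∩ T^{m_i^k}B_k) over product sets, with m_i^j ∈ P tending to infinity) is invariant under S × Id × … × Id for every S in an ergodic group H_P(T), and its projection onto the last k coordinates is μ^k, then ν = μ^{k+1}. -/
open MeasureTheory Filter Topology

variable {X : Type*} [MeasurableSpace X]

open scoped symmDiff ENNReal


lemma ae_eq_const_of_levelsets {μ : Measure X} [IsProbabilityMeasure μ] {f : X → ℝ≥0∞}
    (hf : Measurable f) (h : ∀ t : ℝ≥0∞, μ {x | t < f x} = 0 ∨ μ {x | t < f x} = 1) :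
    ∃ c : ℝ≥0∞, f =ᵐ[μ] fun _ => c := by
  set s : Set ℝ≥0∞ := {t | μ {x | t < f x} = 0} with hs
  refine ⟨sInf s, ?_⟩
  have claim1 : ∀ t, sInf s < t → μ {x | t < f x} = 0 := by
    intro t ht
    obtain ⟨t', ht's, ht't⟩ := exists_lt_of_csInf_lt ⟨⊤, by simp [hs]⟩ ht
    exact measure_mono_null (fun x hx => lt_trans ht't hx) ht's
  have claim2 : ∀ t, t < sInf s → μ {x | f x ≤ t} = 0 := by
    intro t ht
    have hts : t ∉ s := fun hts => absurd (csInf_le (OrderBot.bddBelow s) hts) (not_le_of_gt ht)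
    have h1 : μ {x | t < f x} = 1 := (h t).resolve_left hts
    have hset : {x | f x ≤ t} = {x | t < f x}ᶜ := by ext x; simp [not_lt]
    rw [hset, measure_compl (measurableSet_lt measurable_const hf) (measure_ne_top _ _), h1]
    simp
  have hgt : μ {x | sInf s < f x} = 0 := by
    refine measure_mono_null (fun x hx => ?_)
      (measure_iUnion_null (s := fun q : ℚ =>
        if sInf s < (Real.toNNReal q : ℝ≥0∞) then {x | (Real.toNNReal q : ℝ≥0∞) < f x} else ∅) ?_)
    · obtain ⟨q, _, hq1, hq2⟩ := ENNReal.lt_iff_exists_rat_btwn.1 hx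
      exact Set.mem_iUnion.2 ⟨q, by simp only [if_pos hq1]; exact hq2⟩
    · intro q
      split_ifs with hq
      · exact claim1 _ hq
      · simp
  have hlt : μ {x | f x < sInf s} = 0 := by
    refine measure_mono_null (fun x hx => ?_)
      (measure_iUnion_null (s := fun q : ℚ =>
        if (Real.toNNReal q : ℝ≥0∞) < sInf s then {x | f x ≤ (Real.toNNReal q : ℝ≥0∞)} else ∅) ?_)
    · obtain ⟨q, _, hq1, hq2⟩ := ENNReal.lt_iff_exists_rat_btwn.1 hx
      exact Set.mem_iUnion.2 ⟨q, by simp only [if_pos hq2]; exact hq1.le⟩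
    · intro q
      split_ifs with hq
      · exact claim2 _ hq
      · simp
  have : μ {x | f x ≠ sInf s} = 0 := by
    refine measure_mono_null (fun x hx => ?_) (measure_union_null hgt hlt)
    rcases lt_or_gt_of_ne (Ne.symm hx) with h' | h'
    · exact Or.inl h'
    · exact Or.inr h'
  exact this


/-- If a measure `ν` on `X^{k+1} = X × X^k` has first marginal `μ`, marginal `μ^k` on the
last `k` coordinates, and is invariant under `S × Id` for every `S` in the ergodic group
`H_P(T)`, then `ν = μ^{k+1}`. -/
theorem joining_of_ergodic_homoclinic_invariance [StandardBorelSpace X]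
    (μ : Measure X) [IsProbabilityMeasure μ]
    (T Tinv : X → X) (hT : MeasurePreserving T μ μ) (hTinv : MeasurePreserving Tinv μ μ)
    (hTl : Function.LeftInverse Tinv T) (hTr : Function.RightInverse Tinv T)
    (P : Set ℕ) (hP : P.Infinite)
    (herg : ∀ A : Set X, MeasurableSet A →
      (∀ S : X → X, InvMP μ S → HomoclinicAlong μ T Tinv S (atTop ⊓ 𝓟 P) →
        μ ((S ⁻¹' A) ∆ A) = 0) → μ A = 0 ∨ μ A = 1)
    (k : ℕ) (ν : Measure (X × (Fin k → X))) [IsProbabilityMeasure ν]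
    (hfst : ν.map Prod.fst = μ)
    (hsnd : ν.map Prod.snd = Measure.pi (fun _ : Fin k => μ))
    (hinv : ∀ S : X → X, InvMP μ S → HomoclinicAlong μ T Tinv S (atTop ⊓ 𝓟 P) →
      ν.map (Prod.map S id) = ν) :
    ν = μ.prod (Measure.pi (fun _ : Fin k => μ)) := by
  have hπ : IsProbabilityMeasure (Measure.pi (fun _ : Fin k => μ)) := by infer_instance
  refine (Measure.prod_eq fun A B hA hB => ?_).symm
  -- the measure `A ↦ ν (A ×ˢ B)`
  set νB : Measure X := (ν.restrict (Prod.snd ⁻¹' B)).map Prod.fst with hνBdef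
  have hνB_apply : ∀ A' : Set X, MeasurableSet A' → νB A' = ν (A' ×ˢ B) := by
    intro A' hA'
    rw [hνBdef, Measure.map_apply measurable_fst hA',
      Measure.restrict_apply (measurable_fst hA'), Set.prod_eq]
  have hle : ∀ s : Set X, MeasurableSet s → νB s ≤ μ s := by
    intro s hs
    calc νB s = ν (s ×ˢ B) := hνB_apply s hs
    _ ≤ ν (Prod.fst ⁻¹' s) := measure_mono (by rw [← Set.prod_univ]; exact Set.prod_mono_right (Set.subset_univ B))
    _ = μ s := by rw [← hfst, Measure.map_apply measurable_fst hs]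
  have hfin : IsFiniteMeasure νB :=
    ⟨lt_of_le_of_lt ((hle Set.univ MeasurableSet.univ).trans_eq measure_univ) ENNReal.one_lt_top⟩
  have hac : νB ≪ μ := Measure.AbsolutelyContinuous.mk fun s hs h0 =>
    le_antisymm (h0 ▸ hle s hs) zero_le
  set h : X → ℝ≥0∞ := νB.rnDeriv μ with hh
  -- invariance of νB under homoclinic maps
  have hνBinv : ∀ S : X → X, InvMP μ S → HomoclinicAlong μ T Tinv S (atTop ⊓ 𝓟 P) →
      νB.map S = νB := by
    intro S hS hSH
    have hSm : Measurable S := hS.1.measurable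
    refine Measure.ext fun t ht => ?_
    rw [Measure.map_apply hSm ht, hνB_apply _ (hSm ht), hνB_apply _ ht]
    have : (S ⁻¹' t) ×ˢ B = Prod.map S id ⁻¹' (t ×ˢ B) := by
      rw [Set.preimage_prod_map_prod]; simp
    rw [this, ← Measure.map_apply (hSm.prodMap measurable_id) (ht.prod hB), hinv S hS hSH]
  -- invariance of the density under homoclinic maps
  have hhinv : ∀ S : X → X, InvMP μ S → HomoclinicAlong μ T Tinv S (atTop ⊓ 𝓟 P) →
      (fun x => h (S x)) =ᵐ[μ] h := by
    intro S hS hSH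
    obtain ⟨hSm, Sinv, hSinvm, hl, hr⟩ := hS
    let e : X ≃ᵐ X :=
      { toFun := S, invFun := Sinv, left_inv := hl, right_inv := hr,
        measurable_toFun := hSm.measurable, measurable_invFun := hSinvm.measurable }
    have hemb : MeasurableEmbedding S := e.measurableEmbedding
    have := hemb.rnDeriv_map νB μ
    rw [hνBinv S ⟨hSm, Sinv, hSinvm, hl, hr⟩ hSH, hSm.map_eq] at this
    exact this
  -- level sets are a.e. invariant, hence trivial, hence `h` is a.e. constant
  have hmeas : Measurable h := Measure.measurable_rnDeriv _ _
  have hlevel : ∀ t : ℝ≥0∞, μ {x | t < h x} = 0 ∨ μ {x | t < h x} = 1 := by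
    intro t
    refine herg _ (measurableSet_lt measurable_const hmeas) fun S hS hSH => ?_
    have hae := hhinv S hS hSH
    refine measure_mono_null (fun x hx => ?_) hae
    simp only [Set.mem_symmDiff, Set.mem_preimage, Set.mem_setOf_eq] at hx
    simp only [Set.mem_compl_iff, Set.mem_setOf_eq]
    rcases hx with ⟨h1, h2⟩ | ⟨h1, h2⟩ <;> exact fun hEq => by simp [hEq] at h1 h2; exact absurd h1 h2.not_gt
  obtain ⟨c, hc⟩ := ae_eq_const_of_levelsets hmeas hlevel
  -- identify the constant
  have hint : ∀ s : Set X, MeasurableSet s → ν (s ×ˢ B) = c * μ s := by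
    intro s hs
    rw [← hνB_apply s hs, ← Measure.setLIntegral_rnDeriv hac s]
    rw [setLIntegral_congr_fun_ae hs (Filter.Eventually.mono hc fun x hx _ => hx)]
    simp [lintegral_const]
  have hcB : c = (Measure.pi (fun _ : Fin k => μ)) B := by
    have h1 := hint Set.univ MeasurableSet.univ
    rw [Set.univ_prod, ← Measure.map_apply measurable_snd hB, hsnd] at h1
    simpa using h1.symm
  rw [hint A hA, hcB, mul_comm]
end

section
/- If T is a mixing invertible measure-preserving transformation of a probability space with ergodic homoclinic group H(T), then T is mixing of all orders: for measurable sets B_0, …, B_k and sequences 0 = m_i^0 < m_i^1 < … < m_i^k with all gaps m_i^{j+1} − m_i^j → ∞, μ(B_0 ∩ T^{m_i^1}B_1 ∩ … ∩ T^{m_i^k}B_k) → μ(B_0)⋯μ(B_k). -/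
open MeasureTheory Filter Topology

variable {X : Type*} [MeasurableSpace X]

open scoped symmDiff


section Aux
set_option linter.unusedSectionVars false

variable {X : Type*} [MeasurableSpace X] {μ : Measure X}

/-- indicator function, as a real valued function -/
noncomputable def ind (A : Set X) : X → ℝ := A.indicator 1

lemma ind_nonneg (A : Set X) (x : X) : 0 ≤ ind A x := by
  unfold ind; by_cases h : x ∈ A <;> simp [Set.indicator_apply, h]

lemma ind_le_one (A : Set X) (x : X) : ind A x ≤ 1 := by
  unfold ind; by_cases h : x ∈ A <;> simp [Set.indicator_apply, h]

lemma ind_abs_le_one (A : Set X) (x : X) : |ind A x| ≤ 1 := by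
  rw [abs_le]; exact ⟨le_trans (by norm_num) (ind_nonneg A x), ind_le_one A x⟩

lemma ind_measurable {A : Set X} (hA : MeasurableSet A) : Measurable (ind A) :=
  measurable_one.indicator hA

lemma ind_comp (A : Set X) (φ : X → X) (x : X) : ind A (φ x) = ind (φ ⁻¹' A) x := by
  unfold ind
  by_cases h : φ x ∈ A <;> simp [Set.indicator_apply, h]

lemma ind_memℒp [IsFiniteMeasure μ] {A : Set X} (hA : MeasurableSet A) :
    MemLp (ind A) 2 μ :=
  MemLp.of_bound (ind_measurable hA).aestronglyMeasurable 1
    (Filter.Eventually.of_forall fun x => by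
      rw [Real.norm_eq_abs]; exact ind_abs_le_one A x)

lemma abs_prod_sub_prod_le {ι : Type*} (s : Finset ι) (f g : ι → ℝ)
    (hf : ∀ i ∈ s, |f i| ≤ 1) (hg : ∀ i ∈ s, |g i| ≤ 1) :
    |∏ i ∈ s, f i - ∏ i ∈ s, g i| ≤ ∑ i ∈ s, |f i - g i| := by
  induction s using Finset.cons_induction with
  | empty => simp
  | cons a s ha ih =>
    rw [Finset.prod_cons, Finset.prod_cons, Finset.sum_cons]
    have key : f a * ∏ i ∈ s, f i - g a * ∏ i ∈ s, g i
        = f a * (∏ i ∈ s, f i - ∏ i ∈ s, g i) + (f a - g a) * ∏ i ∈ s, g i := by ring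
    rw [key]
    have hQ : |∏ i ∈ s, g i| ≤ 1 := by
      rw [Finset.abs_prod]
      exact Finset.prod_le_one (fun i _ => abs_nonneg _)
        (fun i hi => hg i (Finset.mem_cons_of_mem hi))
    calc |f a * (∏ i ∈ s, f i - ∏ i ∈ s, g i) + (f a - g a) * ∏ i ∈ s, g i|
        ≤ |f a * (∏ i ∈ s, f i - ∏ i ∈ s, g i)| + |(f a - g a) * ∏ i ∈ s, g i| := abs_add_le _ _
      _ ≤ 1 * |∏ i ∈ s, f i - ∏ i ∈ s, g i| + |f a - g a| * 1 := by
          rw [abs_mul, abs_mul]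
          exact add_le_add
            (mul_le_mul_of_nonneg_right (hf a (Finset.mem_cons_self a s)) (abs_nonneg _))
            (mul_le_mul_of_nonneg_left hQ (abs_nonneg _))
      _ = |∏ i ∈ s, f i - ∏ i ∈ s, g i| + |f a - g a| := by ring
      _ ≤ (∑ i ∈ s, |f i - g i|) + |f a - g a| := by
          gcongr
          exact ih (fun i hi => hf i (Finset.mem_cons_of_mem hi))
            (fun i hi => hg i (Finset.mem_cons_of_mem hi))
      _ = |f a - g a| + ∑ i ∈ s, |f i - g i| := by ring

lemma integrable_of_bdd [IsFiniteMeasure μ] {f : X → ℝ} {C : ℝ}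
    (hm : AEStronglyMeasurable f μ) (hb : ∀ x, |f x| ≤ C) : Integrable f μ :=
  Integrable.mono' (integrable_const C) hm
    (Filter.Eventually.of_forall fun x => by rw [Real.norm_eq_abs]; exact hb x)

/-- change of variables along a measure preserving map -/
lemma integral_comp_mp {φ : X → X} (hφ : MeasurePreserving φ μ μ) {f : X → ℝ}
    (hf : AEStronglyMeasurable f μ) : ∫ x, f (φ x) ∂μ = ∫ x, f x ∂μ := by
  rw [← MeasureTheory.integral_map hφ.measurable.aemeasurable (by rwa [hφ.map_eq])]
  rw [hφ.map_eq]

/-- L¹ norm bounded by L² norm on probability spaces -/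
lemma int_abs_le_eLpNorm [IsProbabilityMeasure μ] {h : X → ℝ} {C : ℝ}
    (hm : AEStronglyMeasurable h μ) (hb : ∀ x, |h x| ≤ C) :
    ∫ x, |h x| ∂μ ≤ (eLpNorm h 2 μ).toReal := by
  have h1 : eLpNorm h 1 μ ≤ eLpNorm h 2 μ :=
    eLpNorm_le_eLpNorm_of_exponent_le (by norm_num) hm
  have h2 : eLpNorm h 2 μ ≠ ⊤ := by
    refine ne_of_lt (lt_of_le_of_lt (eLpNorm_le_of_ae_bound
      (Filter.Eventually.of_forall fun x => by rw [Real.norm_eq_abs]; exact hb x)) ?_)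
    simp only [measure_univ]
    exact ENNReal.mul_lt_top (by simp) ENNReal.ofReal_lt_top
  have hint : Integrable h μ := integrable_of_bdd hm hb
  have h3 : ∫ x, |h x| ∂μ = (eLpNorm h 1 μ).toReal := by
    rw [eLpNorm_one_eq_lintegral_enorm]
    rw [← integral_norm_eq_lintegral_enorm hm]
    simp [Real.norm_eq_abs]
  rw [h3]
  exact ENNReal.toReal_mono h2 h1

end Aux
section Aux2
set_option linter.unusedSectionVars false
variable {X : Type*} [MeasurableSpace X] {μ : Measure X}

lemma prod_ind_eq_ind_iInter {N : ℕ} (A : Fin N → Set X) (x : X) :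
    ∏ j, ind (A j) x = ind (⋂ j, A j) x := by
  by_cases h : x ∈ ⋂ j, A j
  · have hx : ∀ j, x ∈ A j := by simpa [Set.mem_iInter] using h
    unfold ind
    rw [Set.indicator_of_mem h]
    rw [Finset.prod_congr rfl (fun j _ => Set.indicator_of_mem (hx j) _)]
    simp
  · obtain ⟨j, hj⟩ : ∃ j, x ∉ A j := by simpa [Set.mem_iInter] using h
    unfold ind
    rw [Finset.prod_eq_zero (Finset.mem_univ j) (Set.indicator_of_notMem hj _),
      Set.indicator_of_notMem h]

lemma integral_prod_ind {N : ℕ} (A : Fin N → Set X) (hA : ∀ j, MeasurableSet (A j)) :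
    ∫ x, ∏ j, ind (A j) x ∂μ = (μ (⋂ j, A j)).toReal := by
  simp only [prod_ind_eq_ind_iInter A]
  exact integral_indicator_one (MeasurableSet.iInter fun j => hA j)

lemma measurable_prod_fun {N : ℕ} {f : Fin N → X → ℝ} (hf : ∀ j, Measurable (f j)) :
    Measurable fun x => ∏ j, f j x :=
  Finset.measurable_prod Finset.univ fun j _ => hf j

/-- the key integral comparison estimate -/
lemma abs_integral_prod_sub_prod_le [IsProbabilityMeasure μ] {N : ℕ} {w : X → ℝ}
    {f g : Fin N → X → ℝ} (hw : Measurable w) (hwb : ∀ x, |w x| ≤ 1)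
    (hf : ∀ j, Measurable (f j)) (hfb : ∀ j x, |f j x| ≤ 1)
    (hg : ∀ j, Measurable (g j)) (hgb : ∀ j x, |g j x| ≤ 1) :
    |(∫ x, w x * ∏ j, f j x ∂μ) - ∫ x, w x * ∏ j, g j x ∂μ|
      ≤ ∑ j, ∫ x, |f j x - g j x| ∂μ := by
  have prodb : ∀ (h : Fin N → X → ℝ), (∀ j x, |h j x| ≤ 1) → ∀ x, |∏ j, h j x| ≤ 1 := by
    intro h hb x
    rw [Finset.abs_prod]
    exact Finset.prod_le_one (fun j _ => abs_nonneg _) fun j _ => hb j x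
  have hFint : Integrable (fun x => w x * ∏ j, f j x) μ :=
    integrable_of_bdd (C := 1) (hw.mul (measurable_prod_fun hf)).aestronglyMeasurable
      (fun x => by
        rw [abs_mul]
        exact mul_le_one₀ (hwb x) (abs_nonneg _) (prodb f hfb x))
  have hGint : Integrable (fun x => w x * ∏ j, g j x) μ :=
    integrable_of_bdd (C := 1) (hw.mul (measurable_prod_fun hg)).aestronglyMeasurable
      (fun x => by
        rw [abs_mul]
        exact mul_le_one₀ (hwb x) (abs_nonneg _) (prodb g hgb x))
  have hdint : ∀ j, Integrable (fun x => |f j x - g j x|) μ := fun j =>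
    integrable_of_bdd (C := 2) ((hf j).sub (hg j)).abs.aestronglyMeasurable
      (fun x => by
        rw [abs_abs]
        calc |f j x - g j x| ≤ |f j x| + |g j x| := abs_sub _ _
          _ ≤ 1 + 1 := add_le_add (hfb j x) (hgb j x)
          _ = 2 := by norm_num)
  rw [← integral_sub hFint hGint]
  calc |∫ x, (w x * ∏ j, f j x - w x * ∏ j, g j x) ∂μ|
      ≤ ∫ x, |w x * ∏ j, f j x - w x * ∏ j, g j x| ∂μ := by
        simpa [Real.norm_eq_abs] using
          norm_integral_le_integral_norm (fun x => w x * ∏ j, f j x - w x * ∏ j, g j x) (μ := μ)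
    _ ≤ ∫ x, ∑ j, |f j x - g j x| ∂μ := by
        refine integral_mono (integrable_of_bdd (C := 2)
          ((hw.mul (measurable_prod_fun hf)).sub
            (hw.mul (measurable_prod_fun hg))).abs.aestronglyMeasurable ?_)
          (integrable_finset_sum Finset.univ fun j _ => hdint j) ?_
        · intro x
          rw [abs_abs]
          calc |w x * ∏ j, f j x - w x * ∏ j, g j x|
              ≤ |w x * ∏ j, f j x| + |w x * ∏ j, g j x| := abs_sub _ _
            _ ≤ 1 + 1 := by
                rw [abs_mul, abs_mul]
                exact add_le_add
                  (mul_le_one₀ (hwb x) (abs_nonneg _) (prodb f hfb x))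
                  (mul_le_one₀ (hwb x) (abs_nonneg _) (prodb g hgb x))
            _ = 2 := by norm_num
        · intro x
          calc |w x * ∏ j, f j x - w x * ∏ j, g j x|
              = |w x| * |∏ j, f j x - ∏ j, g j x| := by rw [← abs_mul]; ring_nf
            _ ≤ 1 * |∏ j, f j x - ∏ j, g j x| :=
                mul_le_mul_of_nonneg_right (hwb x) (abs_nonneg _)
            _ = |∏ j, f j x - ∏ j, g j x| := one_mul _
            _ ≤ ∑ j, |f j x - g j x| :=
                abs_prod_sub_prod_le Finset.univ _ _ (fun j _ => hfb j x) (fun j _ => hgb j x)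
    _ = ∑ j, ∫ x, |f j x - g j x| ∂μ := integral_finset_sum Finset.univ fun j _ => hdint j

variable {T Tinv : X → X}

lemma Tinv_iter_T_iter (hTl : Function.LeftInverse Tinv T) {a n : ℕ} (h : a ≤ n) (x : X) :
    Tinv^[a] (T^[n] x) = T^[n - a] x := by
  conv_lhs => rw [show n = a + (n - a) by omega, Function.iterate_add_apply]
  exact (hTl.iterate a) _

lemma T_iter_Tinv_iter (hTr : Function.RightInverse Tinv T) {a n : ℕ} (h : a ≤ n) (x : X) :
    T^[a] (Tinv^[n] x) = Tinv^[n - a] x := by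
  conv_lhs => rw [show n = a + (n - a) by omega, Function.iterate_add_apply]
  exact (hTr.iterate a) _

lemma conj_mp (hT : MeasurePreserving T μ μ) (hTinv : MeasurePreserving Tinv μ μ)
    {S : X → X} (hS : MeasurePreserving S μ μ) (n : ℕ) :
    MeasurePreserving (conjMap T Tinv S n) μ μ :=
  ((hTinv.iterate n).comp hS).comp (hT.iterate n)

lemma conj_measurable (hTm : Measurable T) (hTinvm : Measurable Tinv)
    {S : X → X} (hSm : Measurable S) (n : ℕ) : Measurable (conjMap T Tinv S n) :=
  (hTinvm.iterate n).comp (hSm.comp (hTm.iterate n))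

lemma T_iter_conj (hTl : Function.LeftInverse Tinv T) (hTr : Function.RightInverse Tinv T)
    {S : X → X} {r n : ℕ} (h : r ≤ n) (x : X) :
    T^[r] (conjMap T Tinv S n x) = conjMap T Tinv S (n - r) (T^[r] x) := by
  unfold conjMap
  rw [T_iter_Tinv_iter hTr h]
  congr 2
  rw [← Function.iterate_add_apply]
  congr 1
  omega

lemma conj_zero {S : X → X} (x : X) : conjMap T Tinv S 0 x = S x := rfl

end Aux2
open scoped ENNReal

section Aux3
set_option linter.unusedSectionVars false
variable {X : Type*} [MeasurableSpace X] {μ : Measure X}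

lemma ultrafilter_lim_exists (𝒰 : Ultrafilter ℕ) (f : ℕ → ℝ) (C : ℝ) (hC : ∀ i, |f i| ≤ C) :
    ∃ x, Tendsto f 𝒰 (𝓝 x) ∧ |x| ≤ C := by
  have hpre : f ⁻¹' (Set.Icc (-C) C) = Set.univ :=
    Set.eq_univ_of_forall fun i => by
      obtain ⟨h1, h2⟩ := abs_le.mp (hC i); exact ⟨h1, h2⟩
  have hmem : Set.Icc (-C) C ∈ Ultrafilter.map f 𝒰 := by
    rw [Ultrafilter.mem_map, hpre]; exact Filter.univ_mem
  obtain ⟨x, hx, hle⟩ := isCompact_Icc.ultrafilter_le_nhds (Ultrafilter.map f 𝒰)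
    (le_principal_iff.mpr hmem)
  refine ⟨x, ?_, abs_le.mpr ⟨hx.1, hx.2⟩⟩
  rwa [Ultrafilter.coe_map] at hle

lemma ae_const_of_levels [IsProbabilityMeasure μ] {G : X → ℝ} (hG : Measurable G)
    (h01 : ∀ c : ℝ, μ {x | c < G x} = 0 ∨ μ {x | c < G x} = 1) :
    ∃ c₀ : ℝ, G =ᵐ[μ] fun _ => c₀ := by
  have meas : ∀ c : ℝ, MeasurableSet {x | c < G x} := fun c =>
    measurableSet_lt measurable_const hG
  -- the set of levels with null upper set
  set Z : Set ℝ := {c : ℝ | μ {x | c < G x} = 0} with hZ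
  -- Z is nonempty
  have hZne : Z.Nonempty := by
    have hiInter : (⋂ n : ℕ, {x | (n : ℝ) < G x}) = ∅ := by
      ext x
      simp only [Set.mem_iInter, Set.mem_setOf_eq, Set.mem_empty_iff_false, iff_false, not_forall,
        not_lt]
      obtain ⟨n, hn⟩ := exists_nat_gt (G x)
      exact ⟨n, hn.le⟩
    have htend : Tendsto (fun n : ℕ => μ {x | (n : ℝ) < G x}) atTop (𝓝 0) := by
      have := tendsto_measure_iInter_atTop (μ := μ)
        (s := fun n : ℕ => {x | (n : ℝ) < G x})
        (fun n => (meas _).nullMeasurableSet)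
        (fun a b hab => Set.setOf_subset_setOf.mpr fun x hx =>
          lt_of_le_of_lt (by exact_mod_cast hab) hx)
        ⟨0, measure_ne_top μ _⟩
      rwa [hiInter, measure_empty] at this
    have : ∀ᶠ n : ℕ in atTop, μ {x | (n : ℝ) < G x} < 1 :=
      htend.eventually_lt_const (by norm_num)
    obtain ⟨n, hn⟩ := this.exists
    refine ⟨n, ?_⟩
    rcases h01 n with h | h
    · exact h
    · rw [h] at hn; exact absurd hn (lt_irrefl 1)
  -- Z is bounded below
  have hZbdd : BddBelow Z := by
    have hiUnion : (⋃ n : ℕ, {x | -(n : ℝ) < G x}) = Set.univ := by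
      ext x
      simp only [Set.mem_iUnion, Set.mem_setOf_eq, Set.mem_univ, iff_true]
      obtain ⟨n, hn⟩ := exists_nat_gt (-(G x))
      exact ⟨n, by linarith⟩
    have htend : Tendsto (fun n : ℕ => μ {x | -(n : ℝ) < G x}) atTop (𝓝 1) := by
      have := tendsto_measure_iUnion_atTop (μ := μ)
        (s := fun n : ℕ => {x | -(n : ℝ) < G x})
        (fun a b hab => Set.setOf_subset_setOf.mpr fun x hx =>
          lt_of_le_of_lt (neg_le_neg (by exact_mod_cast hab)) hx)
      rwa [hiUnion, measure_univ] at this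
    have hev : ∀ᶠ n : ℕ in atTop, (0 : ℝ≥0∞) < μ {x | -(n : ℝ) < G x} :=
      htend.eventually_const_lt (by norm_num)
    obtain ⟨n, hn⟩ := hev.exists
    have hone : μ {x | -(n : ℝ) < G x} = 1 := by
      rcases h01 (-(n : ℝ)) with h | h
      · rw [h] at hn; exact absurd hn (lt_irrefl 0)
      · exact h
    refine ⟨-(n : ℝ), fun c hc => ?_⟩
    by_contra hlt
    push_neg at hlt
    have hsub : {x | -(n : ℝ) < G x} ⊆ {x | c < G x} :=
      Set.setOf_subset_setOf.mpr fun x hx => lt_trans hlt hx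
    have : (1 : ℝ≥0∞) ≤ 0 := by
      calc (1 : ℝ≥0∞) = μ {x | -(n : ℝ) < G x} := hone.symm
        _ ≤ μ {x | c < G x} := measure_mono hsub
        _ = 0 := hc
    exact absurd this (by norm_num)
  set c₀ := sInf Z with hc₀def
  -- upper level sets above c₀ are null
  have hup : ∀ c : ℝ, c₀ < c → μ {x | c < G x} = 0 := by
    intro c hc
    obtain ⟨z, hzZ, hzlt⟩ := exists_lt_of_csInf_lt hZne hc
    exact measure_mono_null
      (Set.setOf_subset_setOf.mpr fun x hx => lt_trans hzlt hx) hzZ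
  -- below c₀ the upper level sets are full
  have hdown : ∀ c : ℝ, c < c₀ → μ {x | c < G x} = 1 := by
    intro c hc
    rcases h01 c with h | h
    · exact absurd (csInf_le hZbdd h) (not_le.mpr hc)
    · exact h
  have h1 : μ {x | c₀ < G x} = 0 := by
    have hset : {x | c₀ < G x} = ⋃ n : ℕ, {x | c₀ + 1/(n+1) < G x} := by
      ext x
      simp only [Set.mem_setOf_eq, Set.mem_iUnion]
      constructor
      · intro hx
        obtain ⟨n, hn⟩ := exists_nat_one_div_lt (sub_pos.mpr hx)
        exact ⟨n, by push_cast at hn ⊢; linarith⟩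
      · rintro ⟨n, hn⟩
        have : (0:ℝ) < 1/(n+1) := by positivity
        linarith
    rw [hset]
    exact measure_iUnion_null fun n => hup _ (lt_add_of_pos_right c₀ (by positivity))
  have h2 : μ {x | G x < c₀} = 0 := by
    have hset : {x | G x < c₀} ⊆ ⋃ n : ℕ, {x | c₀ - 1/(n+1) < G x}ᶜ := by
      intro x hx
      simp only [Set.mem_iUnion, Set.mem_compl_iff, Set.mem_setOf_eq, not_lt]
      have hpos : (0:ℝ) < c₀ - G x := sub_pos.mpr hx
      obtain ⟨n, hn⟩ := exists_nat_one_div_lt hpos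
      exact ⟨n, by push_cast at hn ⊢; linarith⟩
    refine measure_mono_null hset (measure_iUnion_null fun n => ?_)
    have hfull : μ {x | c₀ - 1/(n+1) < G x} = 1 :=
      hdown _ (sub_lt_self c₀ (by positivity))
    rw [measure_compl (meas _) (measure_ne_top μ _), hfull, measure_univ, tsub_self]
  refine ⟨c₀, ?_⟩
  rw [Filter.EventuallyEq, ae_iff]
  refine measure_mono_null (fun x hx => ?_) (measure_union_null h1 h2)
  simp only [Set.mem_setOf_eq] at hx ⊢
  rcases lt_or_gt_of_ne hx with h | h
  · exact Or.inr h
  · exact Or.inl h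

end Aux3
section Main
set_option linter.unusedSectionVars false
set_option maxHeartbeats 2000000
variable {X : Type*} [MeasurableSpace X]

theorem main_aux (μ : Measure X) [IsProbabilityMeasure μ] (T Tinv : X → X)
    (hT : MeasurePreserving T μ μ) (hTinv : MeasurePreserving Tinv μ μ)
    (hTl : Function.LeftInverse Tinv T) (hTr : Function.RightInverse Tinv T)
    (herg : ∀ A : Set X, MeasurableSet A →
      (∀ S : X → X, InvMP μ S → HomoclinicAlong μ T Tinv S atTop →
        μ ((S ⁻¹' A) ∆ A) = 0) → μ A = 0 ∨ μ A = 1)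
    (k : ℕ) :
    ∀ (B : Fin (k + 1) → Set X), (∀ j, MeasurableSet (B j)) →
    ∀ (m : Fin (k + 1) → ℕ → ℕ), (∀ i, m 0 i = 0) → (∀ i, StrictMono (fun j => m j i)) →
    (∀ j : Fin k, Tendsto (fun i => m j.succ i - m j.castSucc i) atTop atTop) →
    Tendsto (fun i => (μ (⋂ j, Tinv^[m j i] ⁻¹' B j)).toReal) atTop
      (𝓝 (∏ j, (μ (B j)).toReal)) := by
  induction k with
  | zero =>
    intro B hB m hm0 hmono hgaps
    have hset : ∀ i, (⋂ j, Tinv^[m j i] ⁻¹' B j) = B 0 := by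
      intro i
      ext x
      simp only [Set.mem_iInter, Set.mem_preimage]
      constructor
      · intro hx
        have h0 := hx 0
        rwa [hm0 i, Function.iterate_zero_apply] at h0
      · intro hx j
        have hj : j = 0 := Fin.fin_one_eq_zero j
        rw [hj, hm0 i, Function.iterate_zero_apply]
        exact hx
    have hprod : (∏ j, (μ (B j)).toReal) = (μ (B 0)).toReal := by simp
    simp only [hset, hprod]
    exact tendsto_const_nhds
  | succ k IH =>
    intro B hB m hm0 hmono hgaps
    -- notation
    set n : ℕ → ℕ := fun i => m (Fin.last (k + 1)) i with hn
    have hmle : ∀ (j : Fin (k + 2)) (i : ℕ), m j i ≤ n i := fun j i =>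
      (hmono i).monotone (Fin.le_last j)
    set P : ℕ → X → ℝ :=
      fun i x => ∏ j : Fin (k + 1), ind (B j.succ) (Tinv^[m j.succ i] x) with hP
    have hPmeas : ∀ i, Measurable (P i) := fun i =>
      measurable_prod_fun fun j => (ind_measurable (hB j.succ)).comp (hTinv.measurable.iterate _)
    have hPb : ∀ i x, |P i x| ≤ 1 := by
      intro i x
      rw [hP, Finset.abs_prod]
      exact Finset.prod_le_one (fun _ _ => abs_nonneg _) (fun j _ => ind_abs_le_one _ _)
    set cA : Set X → ℕ → ℝ := fun A i => ∫ x, ind A x * P i x ∂μ with hcA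
    -- transfer to forward iterates
    have transfer : ∀ (A : Set X), MeasurableSet A → ∀ i,
        cA A i = ∫ x, ind A (T^[n i] x) *
          ∏ j : Fin (k + 1), ind (B j.succ) (T^[n i - m j.succ i] x) ∂μ := by
      intro A hA i
      have hmeasF : Measurable fun x => ind A x * P i x := (ind_measurable hA).mul (hPmeas i)
      calc cA A i = ∫ x, ind A x * P i x ∂μ := rfl
        _ = ∫ x, ind A (T^[n i] x) * P i (T^[n i] x) ∂μ :=
            (integral_comp_mp (hT.iterate (n i)) hmeasF.aestronglyMeasurable).symm
        _ = ∫ x, ind A (T^[n i] x) *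
              ∏ j : Fin (k + 1), ind (B j.succ) (T^[n i - m j.succ i] x) ∂μ := by
            apply integral_congr_ae
            refine Filter.Eventually.of_forall fun x => ?_
            simp only [hP]
            congr 1
            refine Finset.prod_congr rfl fun j _ => ?_
            rw [Tinv_iter_T_iter hTl (hmle j.succ i)]
    -- the key homoclinic estimate
    have star : ∀ S : X → X, MeasurePreserving S μ μ →
        HomoclinicAlong μ T Tinv S atTop →
        ∀ A : Set X, MeasurableSet A →
        Tendsto (fun i => cA A i - cA (S ⁻¹' A) i) atTop (𝓝 0) := by
      intro S hSmp hhom A hA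
      have hSm : Measurable S := hSmp.measurable
      have hA' : MeasurableSet (S ⁻¹' A) := hA.preimage hSm
      have hbound : ∀ i, |cA A i - cA (S ⁻¹' A) i| ≤ ∑ j : Fin (k + 1),
          ∫ x, |ind (B j.succ) (conjMap T Tinv S (m j.succ i) x) - ind (B j.succ) x| ∂μ := by
        intro i
        have hconj := conj_mp hT hTinv hSmp (n i)
        have hconjm := conj_measurable hT.measurable hTinv.measurable hSm (n i)
        have hmeasG : Measurable fun x => ind A (T^[n i] x) *
            ∏ j : Fin (k + 1), ind (B j.succ) (T^[n i - m j.succ i] x) :=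
          ((ind_measurable hA).comp (hT.measurable.iterate _)).mul
            (measurable_prod_fun fun j =>
              (ind_measurable (hB j.succ)).comp (hT.measurable.iterate _))
        have e1 : cA A i = ∫ x, ind (S ⁻¹' A) (T^[n i] x) *
            ∏ j : Fin (k + 1),
              ind (B j.succ) (conjMap T Tinv S (m j.succ i) (T^[n i - m j.succ i] x)) ∂μ := by
          calc cA A i = ∫ x, ind A (T^[n i] x) *
                ∏ j : Fin (k + 1), ind (B j.succ) (T^[n i - m j.succ i] x) ∂μ := transfer A hA i
            _ = ∫ x, ind A (T^[n i] (conjMap T Tinv S (n i) x)) *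
                ∏ j : Fin (k + 1),
                  ind (B j.succ) (T^[n i - m j.succ i] (conjMap T Tinv S (n i) x)) ∂μ :=
                (integral_comp_mp hconj hmeasG.aestronglyMeasurable).symm
            _ = ∫ x, ind (S ⁻¹' A) (T^[n i] x) *
                ∏ j : Fin (k + 1),
                  ind (B j.succ) (conjMap T Tinv S (m j.succ i) (T^[n i - m j.succ i] x)) ∂μ := by
                apply integral_congr_ae
                refine Filter.Eventually.of_forall fun x => ?_
                simp only []
                have hA0 : T^[n i] (conjMap T Tinv S (n i) x) = S (T^[n i] x) := by
                  have h := T_iter_conj (S := S) hTl hTr (le_refl (n i)) x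
                  rw [Nat.sub_self] at h
                  exact h
                rw [hA0, ind_comp]
                congr 1
                refine Finset.prod_congr rfl fun j _ => ?_
                rw [T_iter_conj hTl hTr (Nat.sub_le _ _), Nat.sub_sub_self (hmle j.succ i)]
        have e2 : cA (S ⁻¹' A) i = ∫ x, ind (S ⁻¹' A) (T^[n i] x) *
            ∏ j : Fin (k + 1), ind (B j.succ) (T^[n i - m j.succ i] x) ∂μ := transfer _ hA' i
        rw [e1, e2]
        refine le_trans (abs_integral_prod_sub_prod_le
          (w := fun x => ind (S ⁻¹' A) (T^[n i] x))
          (f := fun j x => ind (B j.succ) (conjMap T Tinv S (m j.succ i) (T^[n i - m j.succ i] x)))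
          (g := fun j x => ind (B j.succ) (T^[n i - m j.succ i] x))
          ((ind_measurable hA').comp (hT.measurable.iterate _))
          (fun x => ind_abs_le_one _ _)
          (fun j => (ind_measurable (hB j.succ)).comp
            ((conj_measurable hT.measurable hTinv.measurable hSm _).comp
              (hT.measurable.iterate _)))
          (fun j x => ind_abs_le_one _ _)
          (fun j => (ind_measurable (hB j.succ)).comp (hT.measurable.iterate _))
          (fun j x => ind_abs_le_one _ _)) (le_of_eq ?_)
        refine Finset.sum_congr rfl fun j _ => ?_
        exact integral_comp_mp (hT.iterate (n i - m j.succ i))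
          (((ind_measurable (hB j.succ)).comp
              (conj_measurable hT.measurable hTinv.measurable hSm _)).sub
            (ind_measurable (hB j.succ))).abs.aestronglyMeasurable
      have hε0 : Tendsto (fun i => ∑ j : Fin (k + 1),
          ∫ x, |ind (B j.succ) (conjMap T Tinv S (m j.succ i) x) - ind (B j.succ) x| ∂μ)
          atTop (𝓝 0) := by
        have hzero : (0 : ℝ) = ∑ _j : Fin (k + 1), (0 : ℝ) := by simp
        rw [hzero]
        apply tendsto_finset_sum
        intro j _
        have h1 := hhom (ind (B j.succ)) (ind_memℒp (hB j.succ))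
        have h2 : Tendsto (fun i => m j.succ i) atTop atTop := by
          apply tendsto_atTop_mono _ (hgaps 0)
          intro i
          calc m (0 : Fin (k + 1)).succ i - m (Fin.castSucc (0 : Fin (k + 1))) i
              ≤ m (0 : Fin (k + 1)).succ i := Nat.sub_le _ _
            _ ≤ m j.succ i := (hmono i).monotone (Fin.succ_le_succ_iff.mpr (Fin.zero_le j))
        have h3 := h1.comp h2
        have h4 : Tendsto (fun i => (eLpNorm
            (fun x => ind (B j.succ) (conjMap T Tinv S (m j.succ i) x) - ind (B j.succ) x)
              2 μ).toReal) atTop (𝓝 0) := by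
          have := (ENNReal.tendsto_toReal (a := 0) (by simp)).comp h3
          simpa [Function.comp_def] using this
        apply tendsto_of_tendsto_of_tendsto_of_le_of_le tendsto_const_nhds h4
        · intro i
          exact integral_nonneg fun x => abs_nonneg _
        · intro i
          apply int_abs_le_eLpNorm (C := 2)
          · exact (((ind_measurable (hB j.succ)).comp
              (conj_measurable hT.measurable hTinv.measurable hSm _)).sub
                (ind_measurable (hB j.succ))).aestronglyMeasurable
          · intro x
            calc |ind (B j.succ) (conjMap T Tinv S (m j.succ i) x) - ind (B j.succ) x|
                ≤ |ind (B j.succ) (conjMap T Tinv S (m j.succ i) x)| + |ind (B j.succ) x| :=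
                  abs_sub _ _
              _ ≤ 1 + 1 := add_le_add (ind_abs_le_one _ _) (ind_abs_le_one _ _)
              _ = 2 := by norm_num
      exact squeeze_zero_norm (fun i => by rw [Real.norm_eq_abs]; exact hbound i) hε0
    -- pass to an arbitrary ultrafilter
    rw [Filter.tendsto_iff_ultrafilter]
    intro 𝒰 h𝒰
    have hPmem : ∀ i, MemLp (P i) 2 μ := fun i =>
      MemLp.of_bound (hPmeas i).aestronglyMeasurable 1
        (Filter.Eventually.of_forall fun x => by rw [Real.norm_eq_abs]; exact hPb i x)
    set Pl : ℕ → Lp ℝ 2 μ := fun i => (hPmem i).toLp (P i) with hPldef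
    have hPlnorm : ∀ i, ‖Pl i‖ ≤ 1 := by
      intro i
      have h1 : eLpNorm (P i) 2 μ ≤ 1 := by
        have h2 := eLpNorm_le_of_ae_bound (μ := μ) (p := 2) (f := P i) (C := 1)
          (Filter.Eventually.of_forall fun x => by rw [Real.norm_eq_abs]; exact hPb i x)
        simpa [measure_univ] using h2
      calc ‖Pl i‖ = (eLpNorm (P i) 2 μ).toReal := Lp.norm_toLp (P i) (hPmem i)
        _ ≤ (1 : ℝ≥0∞).toReal := ENNReal.toReal_mono (by simp) h1
        _ = 1 := by simp
    have key : ∀ h : Lp ℝ 2 μ, ∃ x : ℝ,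
        Tendsto (fun i => (inner ℝ (Pl i) h : ℝ)) 𝒰 (𝓝 x) ∧ |x| ≤ ‖h‖ := by
      intro h
      apply ultrafilter_lim_exists
      intro i
      calc |(inner ℝ (Pl i) h : ℝ)| ≤ ‖Pl i‖ * ‖h‖ := abs_real_inner_le_norm _ _
        _ ≤ 1 * ‖h‖ := mul_le_mul_of_nonneg_right (hPlnorm i) (norm_nonneg h)
        _ = ‖h‖ := one_mul _
    choose L hL habs using key
    have Ladd : ∀ h h', L (h + h') = L h + L h' := by
      intro h h'
      refine tendsto_nhds_unique (hL (h + h')) ?_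
      have htt := (hL h).add (hL h')
      simpa only [← inner_add_right] using htt
    have Lsmul : ∀ (c : ℝ) (h : Lp ℝ 2 μ), L (c • h) = c * L h := by
      intro c h
      refine tendsto_nhds_unique (hL (c • h)) ?_
      have htt := (hL h).const_mul c
      simpa only [← real_inner_smul_right] using htt
    obtain ⟨g, hg⟩ : ∃ g : Lp ℝ 2 μ, ∀ h, (inner ℝ g h : ℝ) = L h := by
      refine ⟨(InnerProductSpace.toDual ℝ (Lp ℝ 2 μ)).symm (LinearMap.mkContinuous
        { toFun := L, map_add' := Ladd,
          map_smul' := fun c h => by simpa using Lsmul c h } 1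
        (fun h => by rw [Real.norm_eq_abs, one_mul]; exact habs h)), fun h => ?_⟩
      exact InnerProductSpace.toDual_symm_apply
    have hweak : ∀ h, Tendsto (fun i => (inner ℝ (Pl i) h : ℝ)) 𝒰 (𝓝 ((inner ℝ g h : ℝ))) :=
      fun h => by rw [hg]; exact hL h
    have hinner_eq : ∀ (A : Set X) (hA : MeasurableSet A) (i : ℕ),
        (inner ℝ (Pl i) (indicatorConstLp 2 hA (measure_ne_top μ A) (1 : ℝ)) : ℝ) = cA A i := by
      intro A hA i
      rw [MeasureTheory.L2.inner_def]
      simp only [hcA]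
      apply integral_congr_ae
      filter_upwards [MemLp.coeFn_toLp (hPmem i), indicatorConstLp_coeFn (μ := μ) (p := 2)
        (hs := hA) (hμs := measure_ne_top μ A) (c := (1:ℝ))] with x h1 h2
      rw [RCLike.inner_apply, starRingEnd_apply, star_trivial]
      rw [show (Pl i) x = P i x from h1, h2]
      by_cases hx : x ∈ A <;> simp [ind, Set.indicator_apply, hx]
    have hg_inner : ∀ (A : Set X) (hA : MeasurableSet A),
        (inner ℝ g (indicatorConstLp 2 hA (measure_ne_top μ A) (1 : ℝ)) : ℝ)
          = ∫ x, g x * ind A x ∂μ := by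
      intro A hA
      rw [MeasureTheory.L2.inner_def]
      apply integral_congr_ae
      filter_upwards [indicatorConstLp_coeFn (μ := μ) (p := 2) (hs := hA)
        (hμs := measure_ne_top μ A) (c := (1:ℝ))] with x h2
      rw [RCLike.inner_apply, starRingEnd_apply, star_trivial, h2]
      by_cases hx : x ∈ A <;> simp [ind, Set.indicator_apply, hx]
    have ha_eq : ∀ i, (μ (⋂ j, Tinv^[m j i] ⁻¹' B j)).toReal = cA (B 0) i := by
      intro i
      rw [← integral_prod_ind (fun j => Tinv^[m j i] ⁻¹' B j)
        (fun j => (hB j).preimage (hTinv.measurable.iterate _))]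
      simp only [hcA, hP]
      apply integral_congr_ae
      refine Filter.Eventually.of_forall fun x => ?_
      have h0 : Tinv^[m 0 i] ⁻¹' B 0 = B 0 := by rw [hm0 i]; simp
      simp only [ind_comp, Fin.prod_univ_succ, h0]
    -- invariance of the weak limit под homoclinic maps
    have hGae : AEStronglyMeasurable (⇑g) μ := Lp.aestronglyMeasurable g
    have hGint : Integrable (⇑g) μ := (Lp.memLp g).integrable one_le_two
    have hGinv : ∀ S : X → X, InvMP μ S → HomoclinicAlong μ T Tinv S atTop →
        (⇑g ∘ S) =ᵐ[μ] ⇑g := by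
      intro S hS hhom
      obtain ⟨hSmp, Sinv, hSinvmp, hSl, hSr⟩ := hS
      have hinv : ∀ A : Set X, MeasurableSet A →
          ∫ x, g x * ind (S ⁻¹' A) x ∂μ = ∫ x, g x * ind A x ∂μ := by
        intro A hA
        have hA' : MeasurableSet (S ⁻¹' A) := hA.preimage hSmp.measurable
        have t1 : Tendsto (fun i => cA A i) 𝒰
            (𝓝 ((inner ℝ g (indicatorConstLp 2 hA (measure_ne_top μ A) (1:ℝ)) : ℝ))) := by
          have := hweak (indicatorConstLp 2 hA (measure_ne_top μ A) (1:ℝ))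
          simpa only [hinner_eq A hA] using this
        have t2 : Tendsto (fun i => cA (S ⁻¹' A) i) 𝒰
            (𝓝 ((inner ℝ g (indicatorConstLp 2 hA' (measure_ne_top μ _) (1:ℝ)) : ℝ))) := by
          have := hweak (indicatorConstLp 2 hA' (measure_ne_top μ _) (1:ℝ))
          simpa only [hinner_eq _ hA'] using this
        have t3 : Tendsto (fun i => cA A i - cA (S ⁻¹' A) i) 𝒰 (𝓝 0) :=
          (star S hSmp hhom A hA).mono_left h𝒰
        have t4 : Tendsto (fun i => cA (S ⁻¹' A) i) 𝒰
            (𝓝 ((inner ℝ g (indicatorConstLp 2 hA (measure_ne_top μ A) (1:ℝ)) : ℝ) - 0)) := by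
          have := t1.sub t3
          simpa only [sub_sub_cancel] using this
        have t5 := tendsto_nhds_unique t2 t4
        rw [sub_zero, hg_inner _ hA', hg_inner _ hA] at t5
        exact t5
      have hmain : ∀ A : Set X, MeasurableSet A →
          ∫ x, g (Sinv x) * ind A x ∂μ = ∫ x, g x * ind A x ∂μ := by
        intro A hA
        have hFm : AEStronglyMeasurable (fun x => g x * ind A (S x)) μ :=
          hGae.mul ((ind_measurable hA).comp hSmp.measurable).aestronglyMeasurable
        have e1 : ∫ x, g x * ind (S ⁻¹' A) x ∂μ = ∫ x, g x * ind A (S x) ∂μ := by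
          apply integral_congr_ae
          refine Filter.Eventually.of_forall fun x => ?_
          simp only []
          rw [ind_comp]
        have e2 : ∫ x, g x * ind A (S x) ∂μ = ∫ x, g (Sinv x) * ind A (S (Sinv x)) ∂μ :=
          (integral_comp_mp hSinvmp hFm).symm
        have e3 : ∫ x, g (Sinv x) * ind A (S (Sinv x)) ∂μ = ∫ x, g (Sinv x) * ind A x ∂μ := by
          apply integral_congr_ae
          refine Filter.Eventually.of_forall fun x => ?_
          simp only []
          rw [hSr x]
        calc ∫ x, g (Sinv x) * ind A x ∂μ
            = ∫ x, g x * ind (S ⁻¹' A) x ∂μ := (e1.trans (e2.trans e3)).symm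
          _ = ∫ x, g x * ind A x ∂μ := hinv A hA
      have hSinvInt : Integrable (fun x => g (Sinv x)) μ := by
        have hmem : MemLp (⇑g ∘ Sinv) 2 μ := by
          refine ⟨hGae.comp_measurePreserving hSinvmp, ?_⟩
          rw [eLpNorm_comp_measurePreserving hGae hSinvmp]
          exact (Lp.memLp g).2
        exact hmem.integrable one_le_two
      have hsint : ∀ s : Set X, MeasurableSet s → μ s < ⊤ →
          ∫ x in s, g (Sinv x) ∂μ = ∫ x in s, g x ∂μ := by
        intro s hs _
        have h1 : ∫ x, g (Sinv x) * ind s x ∂μ = ∫ x in s, g (Sinv x) ∂μ := by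
          rw [← integral_indicator hs]
          apply integral_congr_ae
          refine Filter.Eventually.of_forall fun x => ?_
          by_cases hx : x ∈ s <;> simp [ind, Set.indicator_apply, hx]
        have h2 : ∫ x, g x * ind s x ∂μ = ∫ x in s, g x ∂μ := by
          rw [← integral_indicator hs]
          apply integral_congr_ae
          refine Filter.Eventually.of_forall fun x => ?_
          by_cases hx : x ∈ s <;> simp [ind, Set.indicator_apply, hx]
        rw [← h1, ← h2]
        exact hmain s hs
      have haeq : (fun x => g (Sinv x)) =ᵐ[μ] ⇑g :=
        ae_eq_of_forall_setIntegral_eq_of_sigmaFinite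
          (fun s hs hμs => hSinvInt.integrableOn)
          (fun s hs hμs => hGint.integrableOn) hsint
      have hcomp := hSmp.quasiMeasurePreserving.ae_eq_comp haeq
      have hfix : ((fun x => g (Sinv x)) ∘ S) = ⇑g := funext fun x => by
        simp only [Function.comp_apply, hSl x]
      rw [hfix] at hcomp
      exact hcomp.symm
    -- a measurable representative is a.e. constant
    have hGG' : ⇑g =ᵐ[μ] hGae.mk ⇑g := hGae.ae_eq_mk
    have hG'sm : StronglyMeasurable (hGae.mk ⇑g) := hGae.stronglyMeasurable_mk
    have hlevels : ∀ c : ℝ, μ {x | c < hGae.mk (⇑g) x} = 0 ∨ μ {x | c < hGae.mk (⇑g) x} = 1 := by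
      intro c
      apply herg _ (measurableSet_lt measurable_const hG'sm.measurable)
      intro S hS hhom
      have h1 : (⇑g ∘ S) =ᵐ[μ] ⇑g := hGinv S hS hhom
      have hqmp := hS.1.quasiMeasurePreserving
      have h2 : (hGae.mk (⇑g) ∘ S) =ᵐ[μ] hGae.mk ⇑g :=
        ((hqmp.ae_eq_comp hGG').symm.trans h1).trans hGG'
      have hnull : μ {x | ¬ (hGae.mk (⇑g) ∘ S) x = hGae.mk (⇑g) x} = 0 := ae_iff.mp h2
      refine measure_mono_null ?_ hnull
      intro x hx
      simp only [Set.mem_symmDiff, Set.mem_preimage, Set.mem_setOf_eq] at hx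
      simp only [Set.mem_setOf_eq, Function.comp_apply]
      intro hcontra
      rcases hx with ⟨h4, h5⟩ | ⟨h4, h5⟩
      · rw [hcontra] at h4; exact h5 h4
      · rw [← hcontra] at h4; exact h5 h4
    obtain ⟨c₀, hc₀⟩ := ae_const_of_levels hG'sm.measurable hlevels
    -- identify the constant via the induction hypothesis
    have hle0 : ∀ (j : Fin (k + 1)) (i : ℕ), m (0 : Fin (k + 1)).succ i ≤ m j.succ i :=
      fun j i => (hmono i).monotone (Fin.succ_le_succ_iff.mpr (Fin.zero_le j))
    have hIH : Tendsto (fun i => ∫ x, P i x ∂μ)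
        atTop (𝓝 (∏ j : Fin (k + 1), (μ (B j.succ)).toReal)) := by
      have e0 : ∀ i, ∫ x, P i x ∂μ
          = (μ (⋂ j : Fin (k + 1), Tinv^[m j.succ i] ⁻¹' B j.succ)).toReal := by
        intro i
        rw [← integral_prod_ind (fun j : Fin (k + 1) => Tinv^[m j.succ i] ⁻¹' B j.succ)
          (fun j => (hB _).preimage (hTinv.measurable.iterate _))]
        simp only [hP]
        apply integral_congr_ae
        refine Filter.Eventually.of_forall fun x => ?_
        simp only [ind_comp]
      have e1 : ∀ i, μ (⋂ j : Fin (k + 1), Tinv^[m j.succ i] ⁻¹' B j.succ)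
          = μ (⋂ j : Fin (k + 1),
              Tinv^[m j.succ i - m (0 : Fin (k + 1)).succ i] ⁻¹' B j.succ) := by
        intro i
        have hsets : (⋂ j : Fin (k + 1), Tinv^[m j.succ i] ⁻¹' B j.succ)
            = Tinv^[m (0 : Fin (k + 1)).succ i] ⁻¹'
              (⋂ j : Fin (k + 1),
                Tinv^[m j.succ i - m (0 : Fin (k + 1)).succ i] ⁻¹' B j.succ) := by
          rw [Set.preimage_iInter]
          refine Set.iInter_congr fun j => ?_
          have hcomp : Tinv^[m j.succ i - m (0 : Fin (k + 1)).succ i]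
              ∘ Tinv^[m (0 : Fin (k + 1)).succ i] = Tinv^[m j.succ i] := by
            funext x
            rw [Function.comp_apply, ← Function.iterate_add_apply]
            congr 1
            have := hle0 j i
            omega
          rw [← Set.preimage_comp, hcomp]
        rw [hsets]
        exact (hTinv.iterate _).measure_preimage
          (MeasurableSet.iInter fun j =>
            (hB _).preimage (hTinv.measurable.iterate _)).nullMeasurableSet
      have hmono' : ∀ i, StrictMono fun j : Fin (k + 1) =>
          m j.succ i - m (0 : Fin (k + 1)).succ i := by
        intro i j j' hlt
        show m j.succ i - m (0 : Fin (k + 1)).succ i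
          < m j'.succ i - m (0 : Fin (k + 1)).succ i
        have h1 := hle0 j i
        have h1' := hle0 j' i
        have h2 : m j.succ i < m j'.succ i := hmono i (Fin.succ_lt_succ_iff.mpr hlt)
        omega
      have hgaps' : ∀ j : Fin k, Tendsto (fun i =>
          (m (j.succ : Fin (k + 1)).succ i - m (0 : Fin (k + 1)).succ i)
          - (m (j.castSucc : Fin (k + 1)).succ i - m (0 : Fin (k + 1)).succ i)) atTop atTop := by
        intro j
        have heq : (fun i => (m (j.succ : Fin (k + 1)).succ i - m (0 : Fin (k + 1)).succ i)
            - (m (j.castSucc : Fin (k + 1)).succ i - m (0 : Fin (k + 1)).succ i))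
            = fun i => m ((j.succ : Fin (k + 1)).succ) i
              - m ((j.succ : Fin (k + 1)).castSucc) i := by
          funext i
          have h1 := hle0 j.castSucc i
          have h2 := hle0 j.succ i
          have h3 : ((j.succ : Fin (k + 1)).castSucc : Fin (k + 2))
              = ((j.castSucc : Fin (k + 1)).succ : Fin (k + 2)) := (Fin.succ_castSucc j).symm
          rw [h3]
          omega
        rw [heq]
        exact hgaps j.succ
      have hIH' := IH (fun j => B j.succ) (fun j => hB j.succ)
        (fun j i => m j.succ i - m (0 : Fin (k + 1)).succ i)
        (fun i => Nat.sub_self _) hmono' hgaps'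
      have e2 : ∀ i, (μ (⋂ j : Fin (k + 1), Tinv^[m j.succ i] ⁻¹' B j.succ)).toReal
          = (μ (⋂ j : Fin (k + 1),
              Tinv^[m j.succ i - m (0 : Fin (k + 1)).succ i] ⁻¹' B j.succ)).toReal :=
        fun i => by rw [e1 i]
      simp only [e0, e2]
      exact hIH'
    have huniv : (inner ℝ g (indicatorConstLp 2 MeasurableSet.univ (measure_ne_top μ _) (1:ℝ)) : ℝ)
        = ∏ j : Fin (k + 1), (μ (B j.succ)).toReal := by
      have t1 : Tendsto (fun i => cA Set.univ i) 𝒰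
          (𝓝 ((inner ℝ g (indicatorConstLp 2 MeasurableSet.univ
            (measure_ne_top μ _) (1:ℝ)) : ℝ))) := by
        have := hweak (indicatorConstLp 2 MeasurableSet.univ (measure_ne_top μ _) (1:ℝ))
        simpa only [hinner_eq Set.univ MeasurableSet.univ] using this
      have t2 : ∀ i, cA Set.univ i = ∫ x, P i x ∂μ := by
        intro i
        simp only [hcA]
        apply integral_congr_ae
        refine Filter.Eventually.of_forall fun x => ?_
        simp [ind]
      have t3 : Tendsto (fun i => cA Set.univ i)
          atTop (𝓝 (∏ j : Fin (k + 1), (μ (B j.succ)).toReal)) := by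
        simp only [t2]
        exact hIH
      exact tendsto_nhds_unique t1 (t3.mono_left h𝒰)
    have hintc₀ : ∫ x, hGae.mk (⇑g) x ∂μ = c₀ := by
      rw [integral_congr_ae hc₀]
      simp
    have hc₀q : c₀ = ∏ j : Fin (k + 1), (μ (B j.succ)).toReal := by
      have e1 := hg_inner Set.univ MeasurableSet.univ
      have e2 : ∫ x, g x * ind Set.univ x ∂μ = ∫ x, g x ∂μ := by
        apply integral_congr_ae
        refine Filter.Eventually.of_forall fun x => ?_
        simp [ind]
      have e3 : ∫ x, g x ∂μ = ∫ x, hGae.mk (⇑g) x ∂μ := integral_congr_ae hGG'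
      rw [e1, e2, e3, hintc₀] at huniv
      exact huniv
    have hfinal : (inner ℝ g (indicatorConstLp 2 (hB 0) (measure_ne_top μ _) (1:ℝ)) : ℝ)
        = ∏ j, (μ (B j)).toReal := by
      rw [hg_inner (B 0) (hB 0)]
      have e1 : ∫ x, g x * ind (B 0) x ∂μ = ∫ x, hGae.mk (⇑g) x * ind (B 0) x ∂μ :=
        integral_congr_ae (hGG'.mul EventuallyEq.rfl)
      have e2 : ∫ x, hGae.mk (⇑g) x * ind (B 0) x ∂μ = ∫ x, c₀ * ind (B 0) x ∂μ :=
        integral_congr_ae (hc₀.mul EventuallyEq.rfl)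
      have e3 : ∫ x, c₀ * ind (B 0) x ∂μ = c₀ * (μ (B 0)).toReal := by
        rw [integral_const_mul]
        congr 1
        exact integral_indicator_one (hB 0)
      rw [e1, e2, e3, hc₀q]
      rw [show (∏ j, (μ (B j)).toReal)
        = (μ (B 0)).toReal * ∏ j : Fin (k + 1), (μ (B j.succ)).toReal from
          Fin.prod_univ_succ _]
      ring
    have hgoal : Tendsto (fun i => cA (B 0) i) 𝒰 (𝓝 (∏ j, (μ (B j)).toReal)) := by
      rw [← hfinal]
      have := hweak (indicatorConstLp 2 (hB 0) (measure_ne_top μ _) (1:ℝ))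
      simpa only [hinner_eq (B 0) (hB 0)] using this
    simp only [ha_eq]
    exact hgoal

end Main

/-- A mixing transformation with ergodic homoclinic group `H(T)` is mixing of all orders. -/
theorem mixing_of_all_orders_of_ergodic_homoclinic (μ : Measure X) [IsProbabilityMeasure μ]
    (T Tinv : X → X) (hT : MeasurePreserving T μ μ) (hTinv : MeasurePreserving Tinv μ μ)
    (hTl : Function.LeftInverse Tinv T) (hTr : Function.RightInverse Tinv T)
    (hmix : ∀ A B : Set X, MeasurableSet A → MeasurableSet B →
      Tendsto (fun n => (μ (A ∩ Tinv^[n] ⁻¹' B)).toReal) atTop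
        (𝓝 ((μ A).toReal * (μ B).toReal)))
    (herg : ∀ A : Set X, MeasurableSet A →
      (∀ S : X → X, InvMP μ S → HomoclinicAlong μ T Tinv S atTop →
        μ ((S ⁻¹' A) ∆ A) = 0) → μ A = 0 ∨ μ A = 1)
    (k : ℕ) (B : Fin (k + 1) → Set X) (hB : ∀ j, MeasurableSet (B j))
    (m : Fin (k + 1) → ℕ → ℕ)
    (hm0 : ∀ i, m 0 i = 0)
    (hmono : ∀ i, StrictMono (fun j => m j i))
    (hgaps : ∀ j : Fin k, Tendsto (fun i => m j.succ i - m j.castSucc i) atTop atTop) :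
    Tendsto (fun i => (μ (⋂ j, Tinv^[m j i] ⁻¹' B j)).toReal) atTop
      (𝓝 (∏ j, (μ (B j)).toReal)) := by
  exact main_aux μ T Tinv hT hTinv hTl hTr herg k B hB m hm0 hmono hgaps
end

section
/- In the unitary group of a separable infinite-dimensional Hilbert space with the strong operator topology, the subgroup of unitaries of the form U ⊕ I (with U acting on a finite-dimensional subspace and I on its orthogonal complement) is dense. -/
set_option maxHeartbeats 1000000

open Filter Topology

/-- In the unitary group of a separable infinite-dimensional complex Hilbert space, the
subgroup of unitaries of the form `U ⊕ I` (acting as the identity on the orthogonal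
complement of a finite-dimensional subspace) is dense in the strong operator topology:
every unitary can be approximated on any finite set of vectors. -/
theorem finiteDimensional_unitaries_SOT_dense
    {H : Type*} [NormedAddCommGroup H] [InnerProductSpace ℂ H] [CompleteSpace H]
    [TopologicalSpace.SeparableSpace H] (hinf : ¬ FiniteDimensional ℂ H)
    (U : H →L[ℂ] H) (hU : U ∈ unitary (H →L[ℂ] H))
    (ε : ℝ) (hε : 0 < ε) (s : Finset H) :
    ∃ V : H →L[ℂ] H, V ∈ unitary (H →L[ℂ] H) ∧
      (∃ K : Submodule ℂ H, FiniteDimensional ℂ K ∧ ∀ x ∈ Kᗮ, V x = x) ∧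
      ∀ v ∈ s, ‖V v - U v‖ < ε := by
  classical
  set F : Submodule ℂ H := Submodule.span ℂ (s : Set H) with hF
  set K : Submodule ℂ H := F ⊔ F.map U.toLinearMap with hK
  haveI : FiniteDimensional ℂ K := inferInstance
  haveI : CompleteSpace K := FiniteDimensional.complete ℂ K
  set F₁ : Submodule ℂ K := F.comap K.subtype with hF₁
  have hmem : ∀ x : F₁, U ((x : K) : H) ∈ K := fun x =>
    le_sup_right (α := Submodule ℂ H) (Submodule.mem_map_of_mem x.2)
  -- the isometry L : F₁ →ₗᵢ K given by U
  set Llin : F₁ →ₗ[ℂ] K :=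
    LinearMap.codRestrict K (U.toLinearMap.comp (K.subtype.comp F₁.subtype)) hmem with hLlin
  have hUnorm : ∀ x : H, ‖U x‖ = ‖x‖ := fun x => U.norm_map_of_mem_unitary hU x
  set L : F₁ →ₗᵢ[ℂ] K := ⟨Llin, fun x => hUnorm ((x : K) : H)⟩ with hL
  -- extend to an isometry of K, which is surjective by finite-dimensionality
  set g : K →ₗᵢ[ℂ] K := L.extend with hg
  have hgsurj : Function.Surjective g := by
    have := (LinearMap.injective_iff_surjective (f := g.toLinearMap)).mp g.injective
    exact this
  -- assemble the global map
  set M : H →L[ℂ] H :=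
    K.subtypeL ∘L (g.toContinuousLinearMap ∘L Submodule.orthogonalProjectionOnto K) +
      Kᗮ.subtypeL ∘L Submodule.orthogonalProjectionOnto Kᗮ with hM
  have hMapply : ∀ x : H,
      M x = (g (Submodule.orthogonalProjectionOnto K x) : H) + (Submodule.orthogonalProjectionOnto Kᗮ x : H) :=
    fun x => rfl
  have horth : ∀ x : H, inner (𝕜 := ℂ) ((g (Submodule.orthogonalProjectionOnto K x) : H))
      ((Submodule.orthogonalProjectionOnto Kᗮ x : H)) = 0 := fun x =>
    Submodule.inner_right_of_mem_orthogonal (g (Submodule.orthogonalProjectionOnto K x)).2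
      (Submodule.orthogonalProjectionOnto Kᗮ x).2
  have hMnorm : ∀ x : H, ‖M x‖ = ‖x‖ := by
    intro x
    rw [← sq_eq_sq₀ (norm_nonneg _) (norm_nonneg _), hMapply]
    have h1 := norm_add_sq_eq_norm_sq_add_norm_sq_of_inner_eq_zero _ _ (horth x)
    have h2 := Submodule.norm_sq_eq_add_norm_sq_projection x K
    have h3 : ‖(g (Submodule.orthogonalProjectionOnto K x) : H)‖ = ‖(Submodule.orthogonalProjectionOnto K x : H)‖ := by
      rw [Submodule.norm_coe, Submodule.norm_coe, g.norm_map]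
    simp only [sq] at h1 h2 ⊢
    rw [h1, h3, h2]
    simp only [Submodule.norm_coe]
  have hMinj : Function.Injective M := by
    intro x y hxy
    have : ‖M (x - y)‖ = ‖x - y‖ := hMnorm _
    rw [map_sub, hxy, sub_self, norm_zero] at this
    exact sub_eq_zero.mp (norm_eq_zero.mp this.symm)
  -- M fixes Kᗮ
  have hMorth : ∀ x ∈ Kᗮ, M x = x := by
    intro x hx
    rw [hMapply]
    rw [Submodule.orthogonalProjectionOnto_apply_of_mem_orthogonal (K := K) hx,
      (Submodule.coe_orthogonalProjectionOnto_apply Kᗮ x).trans (Submodule.starProjection_eq_self_iff.mpr hx)]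
    simp
  -- M fixes elements of K in the sense of mapping onto K, and surjectivity
  have hMK : ∀ z : K, M (z : H) = (g z : H) := by
    intro z
    rw [hMapply, Submodule.orthogonalProjectionOnto_mem_subspace_eq_self z]
    have : Submodule.orthogonalProjectionOnto Kᗮ (z : H) = 0 :=
      Submodule.orthogonalProjectionOnto_apply_of_mem_orthogonal (K := Kᗮ)
        (Submodule.le_orthogonal_orthogonal K z.2)
    rw [this]; simp
  have hMsurj : Function.Surjective M := by
    intro y
    obtain ⟨z, hz⟩ := hgsurj (Submodule.orthogonalProjectionOnto K y)
    refine ⟨(z : H) + (Submodule.orthogonalProjectionOnto Kᗮ y : H), ?_⟩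
    rw [map_add, hMK z, hz, hMorth _ (Submodule.orthogonalProjectionOnto Kᗮ y).2]
    exact Submodule.starProjection_add_starProjection_orthogonal (K := K) y
  -- the unitary
  set e : H ≃ₗᵢ[ℂ] H :=
    { LinearEquiv.ofBijective (M : H →ₗ[ℂ] H) ⟨hMinj, hMsurj⟩ with
      norm_map' := hMnorm } with he
  refine ⟨M, ?_, ⟨K, inferInstance, hMorth⟩, ?_⟩
  · have : M = ((Unitary.linearIsometryEquiv.symm e : unitary (H →L[ℂ] H)) : H →L[ℂ] H) := by
      ext x; rfl
    rw [this]
    exact (Unitary.linearIsometryEquiv.symm e).2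
  · intro v hv
    have hvF : v ∈ F := Submodule.subset_span hv
    have hvK : v ∈ K := le_sup_left (α := Submodule ℂ H) hvF
    have : M v = U v := by
      have h1 : M v = (g (⟨v, hvK⟩ : K) : H) := hMK ⟨v, hvK⟩
      have h2 : g (⟨v, hvK⟩ : K) = L (⟨⟨v, hvK⟩, hvF⟩ : F₁) := by
        have := L.extend_apply (⟨⟨v, hvK⟩, hvF⟩ : F₁)
        exact this
      rw [h1, h2]; rfl
    rw [this, sub_self, norm_zero]; exact hε
end

section
/- Let T be ergodic measure-preserving on a probability space and suppose a group G of measure-preserving transformations satisfies: for each S ∈ G and each bounded measurable f, (1/N)Σ_{n=1}^N ‖f ∘ (T^{-n} S T^n) − f‖₂ → 0. If G acts ergodically, then T is weakly mixing. -/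
open MeasureTheory Filter Topology

variable {X : Type*} [MeasurableSpace X]

open scoped symmDiff

open Set ENNReal in
/-- The `L²` norm of the difference of the indicator of `B` and its pullback by `c`,
computed as the measure of a symmetric difference. -/
private lemma indicator_eLpNorm_eq (μ : Measure X) [IsProbabilityMeasure μ]
    {B : Set X} (hB : MeasurableSet B) {c : X → X} (hc : Measurable c) :
    (eLpNorm (fun y => B.indicator (fun _ => (1:ℝ)) (c y) - B.indicator (fun _ => (1:ℝ)) y) 2 μ)
      = (μ ((c ⁻¹' B) ∆ B)) ^ (1/2 : ℝ) := by
  have hpt : (fun y => (‖B.indicator (fun _ => (1:ℝ)) (c y)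
        - B.indicator (fun _ => (1:ℝ)) y‖₊ : ℝ≥0∞) ^ (2:ℝ))
      = ((c ⁻¹' B) ∆ B).indicator (fun _ => (1:ℝ≥0∞)) := by
    funext y
    by_cases h1 : c y ∈ B <;> by_cases h2 : y ∈ B <;>
      simp [Set.indicator_apply, h1, h2, Set.mem_symmDiff, ENNReal.rpow_natCast]
  rw [eLpNorm_eq_lintegral_rpow_enorm_toReal two_ne_zero ENNReal.ofNat_ne_top]
  simp only [ENNReal.toReal_ofNat, enorm_eq_nnnorm]
  rw [hpt, lintegral_indicator ((hB.preimage hc).symmDiff hB)]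
  simp

open Set ENNReal in
/-- Key lemma : if `S` is Cesàro-weakly homoclinic for `T` then any `T × T`-invariant
set is a.e. invariant under `id × S`. -/
private lemma prod_null_of_weak_homoclinic (μ : Measure X) [IsProbabilityMeasure μ]
    (T Tinv S : X → X) (hT : MeasurePreserving T μ μ) (hTinvm : Measurable Tinv)
    (hTr : Function.RightInverse Tinv T)
    (hS : Measurable S)
    (hwh : ∀ f : X → ℝ, Measurable f → (∃ C : ℝ, ∀ x, |f x| ≤ C) →
      Tendsto (fun N : ℕ => (N : ℝ)⁻¹ *
          ∑ n ∈ Finset.Icc 1 N,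
            (eLpNorm (fun x => f (conjMap T Tinv S n x) - f x) 2 μ).toReal)
        atTop (𝓝 0))
    (A : Set (X × X)) (hA : MeasurableSet A)
    (hAinv : (fun p : X × X => (T p.1, T p.2)) ⁻¹' A = A) :
    (μ.prod μ) (((fun p : X × X => (p.1, S p.2)) ⁻¹' A) ∆ A) = 0 := by
  classical
  set E : Set (X × X) := ((fun p : X × X => (p.1, S p.2)) ⁻¹' A) ∆ A with hE
  have hEmeas : MeasurableSet E :=
    (hA.preimage (measurable_fst.prodMk (hS.comp measurable_snd))).symmDiff hA
  set d : ℝ≥0∞ := (μ.prod μ) E with hd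
  -- iterated invariance
  have hAiter : ∀ n : ℕ, (fun p : X × X => (T^[n] p.1, T^[n] p.2)) ⁻¹' A = A := by
    intro n
    induction n with
    | zero => simp
    | succ n ih =>
      have : (fun p : X × X => (T^[n+1] p.1, T^[n+1] p.2))
          = (fun p : X × X => (T^[n] p.1, T^[n] p.2)) ∘ (fun p : X × X => (T p.1, T p.2)) := by
        funext p
        simp [Function.comp, Function.iterate_succ_apply]
      rw [this, Set.preimage_comp, ih, hAinv]
  have hΦmp : ∀ n : ℕ, MeasurePreserving (fun p : X × X => (T^[n] p.1, T^[n] p.2))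
      (μ.prod μ) (μ.prod μ) := fun n => (hT.iterate n).prod (hT.iterate n)
  have hconjm : ∀ n, Measurable (conjMap T Tinv S n) := fun n =>
    (hTinvm.iterate n).comp (hS.comp (hT.measurable.iterate n))
  set Cset : ℕ → Set (X × X) :=
    fun n => ((fun p : X × X => (p.1, conjMap T Tinv S n p.2)) ⁻¹' A) ∆ A with hCset
  have hCmeas : ∀ n, MeasurableSet (Cset n) := fun n =>
    (hA.preimage (measurable_fst.prodMk ((hconjm n).comp measurable_snd))).symmDiff hA
  have hCd : ∀ n, (μ.prod μ) (Cset n) = d := by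
    intro n
    have h1 : ((fun p : X × X => (p.1, conjMap T Tinv S n p.2)) ⁻¹' A)
        = (fun p : X × X => (T^[n] p.1, T^[n] p.2)) ⁻¹' ((fun p : X × X => (p.1, S p.2)) ⁻¹' A) := by
      ext p
      simp only [Set.mem_preimage]
      constructor
      · intro hp
        rw [← hAiter n] at hp
        simp only [Set.mem_preimage] at hp
        rwa [show T^[n] (conjMap T Tinv S n p.2) = S (T^[n] p.2) from hTr.iterate n _] at hp
      · intro hp
        rw [← hAiter n]
        simp only [Set.mem_preimage]
        rwa [show T^[n] (conjMap T Tinv S n p.2) = S (T^[n] p.2) from hTr.iterate n _]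
    have h2 : Cset n = (fun p : X × X => (T^[n] p.1, T^[n] p.2)) ⁻¹' E := by
      rw [hE, Set.preimage_symmDiff, ← h1, hCset]
      rw [hAiter n]
    rw [h2, (hΦmp n).measure_preimage hEmeas.nullMeasurableSet]
  -- fibers
  have hAx : ∀ x : X, MeasurableSet (Prod.mk x ⁻¹' A) := fun x =>
    hA.preimage measurable_prodMk_left
  have hfiber : ∀ (n : ℕ) (x : X), Prod.mk x ⁻¹' (Cset n)
      = ((conjMap T Tinv S n) ⁻¹' (Prod.mk x ⁻¹' A)) ∆ (Prod.mk x ⁻¹' A) := by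
    intro n x
    rw [hCset, Set.preimage_symmDiff]
    rfl
  set g : ℕ → X → ℝ := fun n x => (μ (Prod.mk x ⁻¹' (Cset n))).toReal with hg
  have hgmeas : ∀ n, Measurable (g n) := fun n =>
    (measurable_measure_prodMk_left (hCmeas n)).ennreal_toReal
  have hgle : ∀ n x, g n x ≤ 1 := by
    intro n x
    simpa using ENNReal.toReal_mono ENNReal.one_ne_top
      (prob_le_one (μ := μ) (s := Prod.mk x ⁻¹' (Cset n)))
  have hgnn : ∀ n x, 0 ≤ g n x := fun n x => ENNReal.toReal_nonneg
  have hgint : ∀ n, ∫ x, g n x ∂μ = d.toReal := by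
    intro n
    rw [hg]
    simp only
    rw [integral_toReal (measurable_measure_prodMk_left (hCmeas n)).aemeasurable
      (Filter.Eventually.of_forall fun x => measure_lt_top μ _)]
    rw [← Measure.prod_apply (hCmeas n), hCd n]
  -- e n x and the relation e² = g
  set e : ℕ → X → ℝ := fun n x =>
    (eLpNorm (fun y => (Prod.mk x ⁻¹' A).indicator (fun _ => (1:ℝ)) (conjMap T Tinv S n y)
      - (Prod.mk x ⁻¹' A).indicator (fun _ => (1:ℝ)) y) 2 μ).toReal with he
  have hesq : ∀ n x, e n x ^ 2 = g n x := by
    intro n x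
    rw [he, hg]
    simp only
    rw [indicator_eLpNorm_eq μ (hAx x) (hconjm n), hfiber n x]
    rw [← ENNReal.toReal_rpow]
    set m := (μ ((conjMap T Tinv S n ⁻¹' (Prod.mk x ⁻¹' A)) ∆ (Prod.mk x ⁻¹' A))).toReal with hm
    have hmnn : (0:ℝ) ≤ m := ENNReal.toReal_nonneg
    rw [← Real.rpow_natCast (m ^ (1/2:ℝ)) 2, ← Real.rpow_mul hmnn]
    norm_num
  have henn : ∀ n x, 0 ≤ e n x := fun n x => ENNReal.toReal_nonneg
  have hele : ∀ n x, e n x ≤ 1 := by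
    intro n x
    nlinarith [hesq n x, hgle n x, henn n x]
  have hge : ∀ n x, g n x ≤ e n x := by
    intro n x
    rw [← hesq n x]
    nlinarith [henn n x, hele n x]
  -- dominated convergence
  set F : ℕ → X → ℝ := fun N x => (N : ℝ)⁻¹ * ∑ n ∈ Finset.Icc 1 N, g n x with hF
  have hFmeas : ∀ N, AEStronglyMeasurable (F N) μ := by
    intro N
    exact ((Finset.measurable_sum _ (fun n _ => hgmeas n)).const_mul _).aestronglyMeasurable
  have hFbound : ∀ N, ∀ᵐ x ∂μ, ‖F N x‖ ≤ (1:ℝ) := by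
    intro N
    refine Filter.Eventually.of_forall fun x => ?_
    have hnn : 0 ≤ F N x := by
      apply mul_nonneg (by positivity)
      exact Finset.sum_nonneg fun n _ => hgnn n x
    rw [Real.norm_of_nonneg hnn, hF]
    simp only
    calc (N : ℝ)⁻¹ * ∑ n ∈ Finset.Icc 1 N, g n x
        ≤ (N : ℝ)⁻¹ * ∑ n ∈ Finset.Icc 1 N, (1:ℝ) := by
          apply mul_le_mul_of_nonneg_left (Finset.sum_le_sum fun n _ => hgle n x) (by positivity)
      _ = (N : ℝ)⁻¹ * N := by simp [Nat.card_Icc]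
      _ ≤ 1 := by
          rcases Nat.eq_zero_or_pos N with h | h
          · simp [h]
          · rw [inv_mul_cancel₀ (by exact_mod_cast h.ne')]
  have hFtend : ∀ᵐ x ∂μ, Tendsto (fun N => F N x) atTop (𝓝 0) := by
    refine Filter.Eventually.of_forall fun x => ?_
    have hup := hwh ((Prod.mk x ⁻¹' A).indicator (fun _ => (1:ℝ)))
      (measurable_const.indicator (hAx x))
      ⟨1, fun y => by
        by_cases hy : y ∈ Prod.mk x ⁻¹' A <;> simp [Set.indicator_apply, hy]⟩
    refine squeeze_zero (fun N => ?_) (fun N => ?_) hup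
    · apply mul_nonneg (by positivity)
      exact Finset.sum_nonneg fun n _ => hgnn n x
    · apply mul_le_mul_of_nonneg_left _ (by positivity)
      exact Finset.sum_le_sum fun n _ => hge n x
  have hDCT := MeasureTheory.tendsto_integral_of_dominated_convergence
    (fun _ => (1:ℝ)) hFmeas (integrable_const 1) hFbound hFtend
  simp only [integral_zero] at hDCT
  have hFint : ∀ N : ℕ, 1 ≤ N → ∫ x, F N x ∂μ = d.toReal := by
    intro N hN
    rw [hF]
    simp only
    rw [MeasureTheory.integral_const_mul]
    rw [MeasureTheory.integral_finset_sum _ (fun n _ => ?_)]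
    · rw [Finset.sum_congr rfl (fun n _ => hgint n)]
      rw [Finset.sum_const, Nat.card_Icc]
      simp only [Nat.add_sub_cancel, nsmul_eq_mul]
      rw [← mul_assoc, inv_mul_cancel₀ (by exact_mod_cast (Nat.one_le_iff_ne_zero.1 hN)), one_mul]
    · exact integrable_toReal_of_lintegral_ne_top
        (measurable_measure_prodMk_left (hCmeas n)).aemeasurable
        (by rw [← Measure.prod_apply (hCmeas n), hCd n]; exact (measure_ne_top _ _))
  have hdt : Tendsto (fun _ : ℕ => d.toReal) atTop (𝓝 0) := by
    refine hDCT.congr' ?_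
    filter_upwards [eventually_ge_atTop 1] with N hN
    exact (hFint N hN)
  have hd0 : d.toReal = 0 := tendsto_nhds_unique tendsto_const_nhds hdt
  rcases (ENNReal.toReal_eq_zero_iff d).1 hd0 with h | h
  · exact h
  · exact absurd h (measure_ne_top _ _)

open Set ENNReal in
/-- A bounded measurable function that is a.e. invariant under every element of a group acting
ergodically (in the sense of `hGerg`) is a.e. constant. -/
private lemma ae_const_of_level_trivial (μ : Measure X) [IsProbabilityMeasure μ]
    (v : X → ℝ) (hv : Measurable v) (h0 : ∀ x, 0 ≤ v x) (h1 : ∀ x, v x ≤ 1)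
    (htriv : ∀ t : ℝ, μ {x | t < v x} = 0 ∨ μ {x | t < v x} = 1) :
    ∃ r : ℝ, v =ᵐ[μ] fun _ => r := by
  classical
  set L : Set ℝ := {t : ℝ | μ {x | t < v x} = 1} with hL
  have hne : (-1 : ℝ) ∈ L := by
    have : {x | (-1:ℝ) < v x} = Set.univ := by
      ext x; simp only [Set.mem_setOf_eq, Set.mem_univ, iff_true]
      linarith [h0 x]
    simp [hL, this]
  have hbdd : BddAbove L := by
    refine ⟨1, fun t ht => ?_⟩
    by_contra h
    push_neg at h
    have : {x | t < v x} = (∅ : Set X) := by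
      ext x; simp only [Set.mem_setOf_eq, Set.mem_empty_iff_false, iff_false, not_lt]
      linarith [h1 x]
    rw [hL] at ht
    simp only [Set.mem_setOf_eq, this, measure_empty] at ht
    exact one_ne_zero ht.symm
  refine ⟨sSup L, ?_⟩
  have hgt : μ {x | sSup L < v x} = 0 := by
    have hsub : {x | sSup L < v x} ⊆ ⋃ q : ℚ, {x | sSup L < (q:ℝ) ∧ (q:ℝ) < v x} := by
      intro x hx
      have hx' : sSup L < v x := hx
      obtain ⟨q, hq1, hq2⟩ := exists_rat_btwn hx'
      exact Set.mem_iUnion.2 ⟨q, hq1, hq2⟩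
    refine measure_mono_null hsub (measure_iUnion_null fun q => ?_)
    by_cases hq : sSup L < (q:ℝ)
    · have hq' : (q:ℝ) ∉ L := fun h => absurd (le_csSup hbdd h) (not_le.2 hq)
      have : μ {x | (q:ℝ) < v x} = 0 := (htriv q).resolve_right hq'
      refine measure_mono_null (fun x hx => hx.2) this
    · have : {x | sSup L < (q:ℝ) ∧ (q:ℝ) < v x} = ∅ := by
        ext x; simp only [Set.mem_setOf_eq, Set.mem_empty_iff_false, iff_false]
        exact fun h => hq h.1
      simp [this]
  have hlt : μ {x | v x < sSup L} = 0 := by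
    have hsub : {x | v x < sSup L} ⊆ ⋃ q : ℚ, {x | v x < (q:ℝ) ∧ (q:ℝ) < sSup L} := by
      intro x hx
      have hx' : v x < sSup L := hx
      obtain ⟨q, hq1, hq2⟩ := exists_rat_btwn hx'
      exact Set.mem_iUnion.2 ⟨q, hq1, hq2⟩
    refine measure_mono_null hsub (measure_iUnion_null fun q => ?_)
    by_cases hq : (q:ℝ) < sSup L
    · obtain ⟨t, htL, hqt⟩ := exists_lt_of_lt_csSup ⟨_, hne⟩ hq
      have hcompl : μ ({x | t < v x}ᶜ) = 0 := by
        have hms : MeasurableSet {x | t < v x} := measurableSet_lt measurable_const hv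
        rw [measure_compl hms (measure_ne_top μ _), htL, measure_univ, tsub_self]
      refine measure_mono_null (fun x hx => ?_) hcompl
      simp only [Set.mem_setOf_eq] at hx
      simp only [Set.mem_compl_iff, Set.mem_setOf_eq, not_lt]
      linarith [hx.1]
    · have : {x | v x < (q:ℝ) ∧ (q:ℝ) < sSup L} = ∅ := by
        ext x; simp only [Set.mem_setOf_eq, Set.mem_empty_iff_false, iff_false]
        exact fun h => hq h.2
      simp [this]
  have : μ {x | v x ≠ sSup L} = 0 := by
    refine measure_mono_null (fun x hx => ?_) (measure_union_null hgt hlt)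
    rcases lt_or_gt_of_ne (hx : v x ≠ sSup L) with h | h
    · exact Or.inr h
    · exact Or.inl h
  exact (MeasureTheory.ae_iff).2 this

open Set ENNReal in
private lemma ginv_ae_const (μ : Measure X) [IsProbabilityMeasure μ] (G : Set (X → X))
    (hGerg : ∀ A : Set X, MeasurableSet A → (∀ g ∈ G, μ ((g ⁻¹' A) ∆ A) = 0) →
      μ A = 0 ∨ μ A = 1)
    (w : X → ℝ≥0∞) (hw : Measurable w) (hwle : ∀ y, w y ≤ 1)
    (hinv : ∀ S ∈ G, (fun y => w (S y)) =ᵐ[μ] w) :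
    w =ᵐ[μ] fun _ => ∫⁻ y, w y ∂μ := by
  set v : X → ℝ := fun y => (w y).toReal with hv
  have hvm : Measurable v := hw.ennreal_toReal
  have hfin : ∀ y, w y ≠ ∞ := fun y => (lt_of_le_of_lt (hwle y) ENNReal.one_lt_top).ne
  obtain ⟨r, hr⟩ := ae_const_of_level_trivial μ v hvm (fun x => ENNReal.toReal_nonneg)
    (fun x => by simpa using ENNReal.toReal_mono ENNReal.one_ne_top (hwle x))
    (by
      intro t
      refine hGerg {x | t < v x} (measurableSet_lt measurable_const hvm) ?_
      intro g hg
      have hnull : μ {y | ¬ w (g y) = w y} = 0 := hinv g hg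
      refine measure_mono_null ?_ hnull
      intro x hx
      simp only [Set.mem_symmDiff, Set.mem_preimage, Set.mem_setOf_eq] at hx ⊢
      rcases hx with ⟨hx1, hx2⟩ | ⟨hx1, hx2⟩ <;>
        · intro h
          simp only [not_lt] at hx2
          rw [show v = fun y => (w y).toReal from hv] at hx1 hx2
          simp only [h] at hx1 hx2
          exact absurd hx1 (not_lt.2 hx2))
  have hweq : w =ᵐ[μ] fun _ => ENNReal.ofReal r := by
    filter_upwards [hr] with y hy
    rw [← ENNReal.ofReal_toReal (hfin y)]
    rw [show (w y).toReal = v y from rfl, hy]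
  have hint : ∫⁻ y, w y ∂μ = ENNReal.ofReal r := by
    rw [lintegral_congr_ae hweq, lintegral_const, measure_univ, mul_one]
  rw [hint]
  exact hweq

/-- If an ergodically acting group `G` of measure-preserving transformations consists of
Cesàro-weakly-homoclinic elements for the ergodic transformation `T`, then `T` is weakly
mixing, i.e. `T × T` is ergodic. -/
theorem weakly_mixing_of_ergodic_weak_homoclinic_group
    (μ : Measure X) [IsProbabilityMeasure μ]
    (T Tinv : X → X) (hT : Ergodic T μ) (hTinv : MeasurePreserving Tinv μ μ)
    (hTl : Function.LeftInverse Tinv T) (hTr : Function.RightInverse Tinv T)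
    (G : Set (X → X)) (hGmp : ∀ g ∈ G, InvMP μ g)
    (hGwh : ∀ S ∈ G, ∀ f : X → ℝ, Measurable f → (∃ C : ℝ, ∀ x, |f x| ≤ C) →
      Tendsto (fun N : ℕ => (N : ℝ)⁻¹ *
          ∑ n ∈ Finset.Icc 1 N,
            (eLpNorm (fun x => f (conjMap T Tinv S n x) - f x) 2 μ).toReal)
        atTop (𝓝 0))
    (hGerg : ∀ A : Set X, MeasurableSet A → (∀ g ∈ G, μ ((g ⁻¹' A) ∆ A) = 0) →
      μ A = 0 ∨ μ A = 1) :
    Ergodic (fun p : X × X => (T p.1, T p.2)) (μ.prod μ) := by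
  classical
  have hTm : MeasurePreserving T μ μ := hT.toMeasurePreserving
  have hTTmp : MeasurePreserving (fun p : X × X => (T p.1, T p.2)) (μ.prod μ) (μ.prod μ) :=
    hTm.prod hTm
  refine ⟨hTTmp, ⟨fun A hA hAinv => ?_⟩⟩
  rw [Filter.eventuallyConst_set']
  set a := (μ.prod μ) A with ha
  have hane : a ≠ ⊤ := measure_ne_top _ _
  -- a.e. invariance of A under id × S
  have hnull1 : ∀ S ∈ G, (μ.prod μ) (((fun p : X × X => (p.1, S p.2)) ⁻¹' A) ∆ A) = 0 :=
    fun S hSG => prod_null_of_weak_homoclinic μ T Tinv S hTm hTinv.measurable hTr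
      ((hGmp S hSG).1.measurable) (hGwh S hSG) A hA hAinv
  -- a.e. invariance of A under S × id, by the swap trick
  have hnull2 : ∀ S ∈ G, (μ.prod μ) (((fun p : X × X => (S p.1, p.2)) ⁻¹' A) ∆ A) = 0 := by
    intro S hSG
    have hSm : Measurable S := (hGmp S hSG).1.measurable
    have hswapA : MeasurableSet (Prod.swap ⁻¹' A : Set (X × X)) := hA.preimage measurable_swap
    have hswapinv : (fun p : X × X => (T p.1, T p.2)) ⁻¹' (Prod.swap ⁻¹' A)
        = Prod.swap ⁻¹' A := by
      ext p
      have h1 := Set.ext_iff.1 hAinv (p.2, p.1)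
      simp only [Set.mem_preimage, Prod.swap_prod_mk] at h1 ⊢
      exact h1
    have h0 := prod_null_of_weak_homoclinic μ T Tinv S hTm hTinv.measurable hTr hSm
      (hGwh S hSG) (Prod.swap ⁻¹' A) hswapA hswapinv
    have hseteq : ((fun p : X × X => (p.1, S p.2)) ⁻¹' (Prod.swap ⁻¹' A)) ∆ (Prod.swap ⁻¹' A)
        = Prod.swap ⁻¹' (((fun p : X × X => (S p.1, p.2)) ⁻¹' A) ∆ A) := by
      rw [Set.preimage_symmDiff]
      rfl
    rw [hseteq] at h0
    have hmeasE : MeasurableSet (((fun p : X × X => (S p.1, p.2)) ⁻¹' A) ∆ A) :=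
      (hA.preimage ((hSm.comp measurable_fst).prodMk measurable_snd)).symmDiff hA
    rwa [(Measure.measurePreserving_swap (μ := μ) (ν := μ)).measure_preimage
      hmeasE.nullMeasurableSet] at h0
  -- vertical fibers have a.e. constant measure equal to a
  have hw1const : (fun y => μ ((fun x => (x, y)) ⁻¹' A)) =ᵐ[μ] fun _ => a := by
    have hw1meas : Measurable (fun y => μ ((fun x => (x, y)) ⁻¹' A)) :=
      measurable_measure_prodMk_right hA
    have hw1inv : ∀ S ∈ G, (fun y => μ ((fun x => (x, S y)) ⁻¹' A))
        =ᵐ[μ] (fun y => μ ((fun x => (x, y)) ⁻¹' A)) := by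
      intro S hSG
      have hSm : Measurable S := (hGmp S hSG).1.measurable
      have hEm : MeasurableSet (((fun p : X × X => (p.1, S p.2)) ⁻¹' A) ∆ A) :=
        (hA.preimage (measurable_fst.prodMk (hSm.comp measurable_snd))).symmDiff hA
      have h0 := hnull1 S hSG
      rw [Measure.prod_apply_symm hEm] at h0
      have h1 := (lintegral_eq_zero_iff (measurable_measure_prodMk_right hEm)).1 h0
      filter_upwards [h1] with y hy
      simp only [Pi.zero_apply] at hy
      have hfib : ((fun x => (x, y)) ⁻¹' (((fun p : X × X => (p.1, S p.2)) ⁻¹' A) ∆ A))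
          = ((fun x => (x, S y)) ⁻¹' A) ∆ ((fun x => (x, y)) ⁻¹' A) := by
        rw [Set.preimage_symmDiff]
        rfl
      rw [hfib] at hy
      exact measure_congr (measure_symmDiff_eq_zero_iff.1 hy)
    have := ginv_ae_const μ G hGerg _ hw1meas (fun y => prob_le_one) hw1inv
    rwa [show ∫⁻ y, μ ((fun x => (x, y)) ⁻¹' A) ∂μ = a from (Measure.prod_apply_symm hA).symm]
      at this
  -- measure of A ∩ (univ ×ˢ C)
  have hkey1 : ∀ C : Set X, MeasurableSet C →
      (μ.prod μ) (A ∩ Set.univ ×ˢ C) = a * μ C := by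
    intro C hC
    have hm : MeasurableSet (A ∩ Set.univ ×ˢ C) := hA.inter (MeasurableSet.univ.prod hC)
    rw [Measure.prod_apply_symm hm]
    calc ∫⁻ y, μ ((fun x => (x, y)) ⁻¹' (A ∩ Set.univ ×ˢ C)) ∂μ
        = ∫⁻ y, C.indicator (fun y' => μ ((fun x => (x, y')) ⁻¹' A)) y ∂μ := by
          refine lintegral_congr fun y => ?_
          by_cases hy : y ∈ C
          · rw [Set.indicator_of_mem hy]
            congr 1
            ext x
            simp [hy]
          · rw [Set.indicator_of_notMem hy]
            have hempty : ((fun x => (x, y)) ⁻¹' (A ∩ Set.univ ×ˢ C)) = ∅ := by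
              ext x; simp [hy]
            simp [hempty]
      _ = ∫⁻ y in C, μ ((fun x => (x, y)) ⁻¹' A) ∂μ := lintegral_indicator hC _
      _ = ∫⁻ _ in C, a ∂μ := lintegral_congr_ae (ae_restrict_of_ae hw1const)
      _ = a * μ C := by rw [setLIntegral_const]
  -- measure of A ∩ (B ×ˢ C)
  have hkey2 : ∀ B C : Set X, MeasurableSet B → MeasurableSet C →
      (μ.prod μ) (A ∩ B ×ˢ C) = a * μ C * μ B := by
    intro B C hB hC
    have hmUC : MeasurableSet (A ∩ Set.univ ×ˢ C) := hA.inter (MeasurableSet.univ.prod hC)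
    have hw2meas : Measurable (fun x => μ (Prod.mk x ⁻¹' (A ∩ Set.univ ×ˢ C))) :=
      measurable_measure_prodMk_left hmUC
    have hfib0 : ∀ x : X, Prod.mk x ⁻¹' (A ∩ Set.univ ×ˢ C) = Prod.mk x ⁻¹' A ∩ C := by
      intro x; ext y; simp
    have hw2inv : ∀ S ∈ G, (fun x => μ (Prod.mk (S x) ⁻¹' (A ∩ Set.univ ×ˢ C)))
        =ᵐ[μ] (fun x => μ (Prod.mk x ⁻¹' (A ∩ Set.univ ×ˢ C))) := by
      intro S hSG
      have hSm : Measurable S := (hGmp S hSG).1.measurable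
      have hEm : MeasurableSet (((fun p : X × X => (S p.1, p.2)) ⁻¹' A) ∆ A) :=
        (hA.preimage ((hSm.comp measurable_fst).prodMk measurable_snd)).symmDiff hA
      have h0 := hnull2 S hSG
      rw [Measure.prod_apply hEm] at h0
      have h1 := (lintegral_eq_zero_iff (measurable_measure_prodMk_left hEm)).1 h0
      filter_upwards [h1] with x hx
      simp only [Pi.zero_apply] at hx
      have hfib : Prod.mk x ⁻¹' (((fun p : X × X => (S p.1, p.2)) ⁻¹' A) ∆ A)
          = (Prod.mk (S x) ⁻¹' A) ∆ (Prod.mk x ⁻¹' A) := by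
        rw [Set.preimage_symmDiff]
        rfl
      rw [hfib] at hx
      have hae := measure_symmDiff_eq_zero_iff.1 hx
      rw [hfib0, hfib0]
      exact measure_congr (hae.inter (Filter.EventuallyEq.refl _ _))
    have hw2const := ginv_ae_const μ G hGerg _ hw2meas (fun x => prob_le_one) hw2inv
    have hw2int : ∫⁻ x, μ (Prod.mk x ⁻¹' (A ∩ Set.univ ×ˢ C)) ∂μ = a * μ C := by
      rw [← Measure.prod_apply hmUC]
      exact hkey1 C hC
    rw [hw2int] at hw2const
    have hm2 : MeasurableSet (A ∩ B ×ˢ C) := hA.inter (hB.prod hC)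
    rw [Measure.prod_apply hm2]
    calc ∫⁻ x, μ (Prod.mk x ⁻¹' (A ∩ B ×ˢ C)) ∂μ
        = ∫⁻ x, B.indicator (fun x' => μ (Prod.mk x' ⁻¹' (A ∩ Set.univ ×ˢ C))) x ∂μ := by
          refine lintegral_congr fun x => ?_
          by_cases hx : x ∈ B
          · rw [Set.indicator_of_mem hx]
            congr 1
            ext y
            simp [hx]
          · rw [Set.indicator_of_notMem hx]
            have hempty : Prod.mk x ⁻¹' (A ∩ B ×ˢ C) = ∅ := by
              ext y; simp [hx]
            simp [hempty]
      _ = ∫⁻ x in B, μ (Prod.mk x ⁻¹' (A ∩ Set.univ ×ˢ C)) ∂μ := lintegral_indicator hB _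
      _ = ∫⁻ _ in B, (a * μ C) ∂μ := lintegral_congr_ae (ae_restrict_of_ae hw2const)
      _ = a * μ C * μ B := by rw [setLIntegral_const]
  -- π-system argument
  have hall : ∀ ⦃t : Set (X × X)⦄, MeasurableSet t →
      (μ.prod μ) (A ∩ t) = a * (μ.prod μ) t := by
    refine MeasurableSpace.induction_on_inter generateFrom_prod.symm isPiSystem_prod ?_ ?_ ?_ ?_
    · simp
    · rintro _ ⟨B, hB, C, hC, rfl⟩
      rw [hkey2 B C hB hC, Measure.prod_prod]
      ring
    · intro t ht hrec
      have hsub : A ∩ t ⊆ A := Set.inter_subset_left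
      have h1 : (μ.prod μ) (A ∩ tᶜ) = (μ.prod μ) A - (μ.prod μ) (A ∩ t) := by
        rw [show A ∩ tᶜ = A \ (A ∩ t) by rw [Set.diff_self_inter, Set.diff_eq]]
        exact measure_diff hsub (hA.inter ht).nullMeasurableSet (measure_ne_top _ _)
      rw [h1, hrec, measure_compl ht (measure_ne_top _ _), measure_univ, ← ha,
        ENNReal.mul_sub (fun _ _ => hane), mul_one]
    · intro f hdisj hmeas hrec
      rw [Set.inter_iUnion,
        measure_iUnion (fun i j hij => ((hdisj hij).mono
          Set.inter_subset_right Set.inter_subset_right)) (fun i => hA.inter (hmeas i)),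
        measure_iUnion hdisj hmeas, ← ENNReal.tsum_mul_left]
      exact tsum_congr fun i => hrec i
  have hAA := hall hA
  rw [Set.inter_self, ← ha] at hAA
  rcases eq_or_ne a 0 with h0 | h0
  · left
    exact MeasureTheory.ae_eq_empty.2 (by rw [← ha]; exact h0)
  · right
    have ha1 : a = 1 := (ENNReal.mul_eq_left h0 hane).1 hAA.symm
    refine MeasureTheory.ae_eq_univ.2 ?_
    rw [measure_compl hA (measure_ne_top _ _), measure_univ, ← ha, ha1, tsub_self]
end
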